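/- arXiv:1501.06955 — 3 statements merged into one kernel-verified Lean document; each statement's English description precedes it below -/
import Mathlib

section
/- Let n ≥ 3. An invertible ℂ-linear map T : ℂⁿ → ℂⁿ satisfies H(Tx) = H(x) for all x ∈ ℂⁿ if and only if T is the composition of a coordinate permutation and an even sign-change map. Consequently the group Λ of linear automorphisms of ℂⁿ preserving H is the semidirect product Υₙ ⋊ Sₙ; in particular Λ is finite. -/
open scoped BigOperators

noncomputable section

/-- The Markoff–Hurwitz polynomial `H(x) = x₁² + ⋯ + xₙ² − x₁⋯xₙ`. -/
def MH (n : ℕ) (x : Fin n → ℂ) : ℂ := (∑ i, x i ^ 2) - ∏ i, x i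

/-- The group `Λ` of invertible `ℂ`-linear maps of `ℂⁿ` preserving `H`. -/
def LinLambda (n : ℕ) : Subgroup ((Fin n → ℂ) ≃ₗ[ℂ] (Fin n → ℂ)) where
  carrier := {T | ∀ x, MH n (T x) = MH n x}
  one_mem' := by intro x; rfl
  mul_mem' := by
    intro T S hT hS x
    have : (T * S) x = T (S x) := rfl
    rw [this, hT, hS]
  inv_mem' := by
    intro T hT x
    have h1 : T (T⁻¹ x) = x := by
      have : (T * T⁻¹) x = x := by rw [mul_inv_cancel]; rfl
      exact this
    calc MH n (T⁻¹ x) = MH n (T (T⁻¹ x)) := (hT _).symm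
    _ = MH n x := by rw [h1]

/-- An even sign-change map of `ℂⁿ` as a linear automorphism. -/
def IsEvenSignChangeL (n : ℕ) (T : (Fin n → ℂ) ≃ₗ[ℂ] (Fin n → ℂ)) : Prop :=
  ∃ ε : Fin n → ℂ, (∀ i, ε i = 1 ∨ ε i = -1) ∧ (∏ i, ε i) = 1 ∧
    ∀ (x : Fin n → ℂ) (i : Fin n), T x i = ε i * x i

/-- A coordinate permutation of `ℂⁿ` as a linear automorphism. -/
def IsCoordPermL (n : ℕ) (T : (Fin n → ℂ) ≃ₗ[ℂ] (Fin n → ℂ)) : Prop :=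
  ∃ σ : Equiv.Perm (Fin n), ∀ (x : Fin n → ℂ) (i : Fin n), T x i = x (σ i)

/-- The group `Υₙ` of even sign-change automorphisms. -/
def UpsilonSub (n : ℕ) : Subgroup ((Fin n → ℂ) ≃ₗ[ℂ] (Fin n → ℂ)) :=
  Subgroup.closure {T | IsEvenSignChangeL n T}

/-- The group `Sₙ` of coordinate-permutation automorphisms. -/
def PermSub (n : ℕ) : Subgroup ((Fin n → ℂ) ≃ₗ[ℂ] (Fin n → ℂ)) :=
  Subgroup.closure {T | IsCoordPermL n T}

namespace MHaux

variable {n : ℕ}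

lemma sq_one {ε : ℂ} (h : ε = 1 ∨ ε = -1) : ε * ε = 1 := by
  rcases h with h | h <;> rw [h] <;> ring

lemma mul_apply (T S : (Fin n → ℂ) ≃ₗ[ℂ] (Fin n → ℂ)) (x : Fin n → ℂ) :
    (T * S) x = T (S x) := rfl

lemma inv_apply (T : (Fin n → ℂ) ≃ₗ[ℂ] (Fin n → ℂ)) (x : Fin n → ℂ) :
    T (T⁻¹ x) = x := by
  have : (T * T⁻¹) x = x := by rw [mul_inv_cancel]; rfl
  exact this

/-- Expansion of a linear map in coordinates. -/
lemma expand (T : (Fin n → ℂ) ≃ₗ[ℂ] (Fin n → ℂ)) (x : Fin n → ℂ) (i : Fin n) :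
    T x i = ∑ j, x j * T (fun l => if j = l then 1 else 0) i := by
  have h : T x = ∑ j, x j • T (fun l => if j = l then 1 else 0) :=
    LinearMap.pi_apply_eq_sum_univ (T : (Fin n → ℂ) →ₗ[ℂ] (Fin n → ℂ)) x
  rw [h]
  simp [Finset.sum_apply, smul_eq_mul]

/-- Maps of the monomial form preserve `MH`. -/
lemma preserves_of_form (T : (Fin n → ℂ) ≃ₗ[ℂ] (Fin n → ℂ)) (σ : Equiv.Perm (Fin n))
    (ε : Fin n → ℂ) (h1 : ∀ i, ε i = 1 ∨ ε i = -1) (h2 : ∏ i, ε i = 1)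
    (h3 : ∀ x i, T x i = ε i * x (σ i)) : ∀ x, MH n (T x) = MH n x := by
  intro x
  unfold MH
  have hs : ∑ i, T x i ^ 2 = ∑ i, x i ^ 2 := by
    rw [← Equiv.sum_comp σ (fun i => x i ^ 2)]
    refine Finset.sum_congr rfl fun i _ => ?_
    rw [h3, mul_pow, sq, sq_one (h1 i), one_mul]
  have hp : ∏ i, T x i = ∏ i, x i := by
    have h4 : ∏ i, T x i = (∏ i, ε i) * ∏ i, x (σ i) := by
      rw [← Finset.prod_mul_distrib]
      exact Finset.prod_congr rfl fun i _ => h3 x i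
    rw [h4, h2, one_mul, Equiv.prod_comp σ x]
  rw [hs, hp]

/-- The main structure theorem: a linear automorphism preserving `MH` is monomial with
even signs. -/
lemma main_struct (hn : 3 ≤ n) (T : (Fin n → ℂ) ≃ₗ[ℂ] (Fin n → ℂ))
    (hT : ∀ x, MH n (T x) = MH n x) :
    ∃ (σ : Equiv.Perm (Fin n)) (ε : Fin n → ℂ),
      (∀ i, ε i = 1 ∨ ε i = -1) ∧ (∏ i, ε i) = 1 ∧
      ∀ (x : Fin n → ℂ) (i : Fin n), T x i = ε i * x (σ i) := by
  -- separate the quadratic and degree-n parts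
  have h2n : (2 : ℂ) ^ n ≠ 4 := by
    intro h
    have h' : ((2 ^ n : ℕ) : ℂ) = ((4 : ℕ) : ℂ) := by push_cast; rw [h]
    have h2 : (2 : ℕ) ^ n = 4 := Nat.cast_inj.mp h'
    have h8 : (2 : ℕ) ^ 3 ≤ 2 ^ n := Nat.pow_le_pow_right (by norm_num) hn
    norm_num at h8
    omega
  have key2 : ∀ x : Fin n → ℂ,
      4 * (∑ i, T x i ^ 2) - 2 ^ n * ∏ i, T x i
        = 4 * (∑ i, x i ^ 2) - 2 ^ n * ∏ i, x i := by
    intro x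
    have hMH : ∀ y : Fin n → ℂ,
        MH n ((2 : ℂ) • y) = 4 * (∑ i, y i ^ 2) - 2 ^ n * ∏ i, y i := by
      intro y
      unfold MH
      congr 1
      · rw [Finset.mul_sum]
        refine Finset.sum_congr rfl fun i _ => ?_
        have : ((2 : ℂ) • y) i = 2 * y i := rfl
        rw [this]; ring
      · have h1 : ∀ i, ((2 : ℂ) • y) i = 2 * y i := fun i => rfl
        calc ∏ i, ((2 : ℂ) • y) i = ∏ i, (2 * y i) := Finset.prod_congr rfl fun i _ => h1 i
          _ = (∏ _i : Fin n, (2 : ℂ)) * ∏ i, y i := Finset.prod_mul_distrib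
          _ = 2 ^ n * ∏ i, y i := by
              rw [Finset.prod_const, Finset.card_univ, Fintype.card_fin]
    have h1 := hT ((2 : ℂ) • x)
    rw [map_smul, hMH, hMH] at h1
    exact h1
  have k1 : ∀ x : Fin n → ℂ,
      (∑ i, T x i ^ 2) - ∏ i, T x i = (∑ i, x i ^ 2) - ∏ i, x i := fun x => hT x
  have hP : ∀ x : Fin n → ℂ, ∏ i, T x i = ∏ i, x i := by
    intro x
    have hB : ((2 : ℂ) ^ n - 4) * ((∏ i, T x i) - ∏ i, x i) = 0 := by
      linear_combination 4 * (k1 x) - key2 x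
    rcases mul_eq_zero.mp hB with h | h
    · exact absurd (by linear_combination h) h2n
    · linear_combination h
  have hQ : ∀ x : Fin n → ℂ, ∑ i, T x i ^ 2 = ∑ i, x i ^ 2 := by
    intro x
    linear_combination k1 x + hP x
  -- matrix entries
  set a : Fin n → Fin n → ℂ := fun i j => T (fun l => if j = l then 1 else 0) i with ha
  have hexp : ∀ (x : Fin n → ℂ) (i : Fin n), T x i = ∑ j, x j * a i j :=
    fun x i => expand T x i
  -- each row has at most one nonzero entry
  have hrow : ∀ i j k, j ≠ k → a i j ≠ 0 → a i k ≠ 0 → False := by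
    intro i j k hjk haj hak
    set w : ℂ := ∑ m ∈ (Finset.univ.erase j).erase k, a i m with hw
    set c : ℂ := if w + a i j = 0 then 2 else 1 with hc
    have hc0 : c ≠ 0 := by rw [hc]; split <;> norm_num
    have hwc : w + a i j * c ≠ 0 := by
      by_cases h : w + a i j = 0
      · have hce : c = 2 := by rw [hc, if_pos h]
        rw [hce]
        intro h2
        apply haj
        have : a i j = (w + a i j * 2) - (w + a i j) := by ring
        rw [this, h2, h, sub_zero]
      · have hce : c = 1 := by rw [hc, if_neg h]
        rw [hce, mul_one]; exact h
    set d : ℂ := -(w + a i j * c) / (a i k) with hd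
    have hd0 : d ≠ 0 := div_ne_zero (neg_ne_zero.mpr hwc) hak
    set x : Fin n → ℂ := fun m => if m = j then c else if m = k then d else 1 with hx
    have hxj : x j = c := by rw [hx]; simp
    have hxk : x k = d := by rw [hx]; simp [Ne.symm hjk]
    have hTxi : T x i = 0 := by
      rw [hexp]
      have hk' : k ∈ Finset.univ.erase j := Finset.mem_erase.mpr ⟨Ne.symm hjk, Finset.mem_univ k⟩
      have h1 : ∑ m, x m * a i m = x j * a i j + ∑ m ∈ Finset.univ.erase j, x m * a i m :=
        (Finset.add_sum_erase _ _ (Finset.mem_univ j)).symm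
      have h2 : ∑ m ∈ Finset.univ.erase j, x m * a i m
          = x k * a i k + ∑ m ∈ (Finset.univ.erase j).erase k, x m * a i m :=
        (Finset.add_sum_erase _ _ hk').symm
      have h3 : ∑ m ∈ (Finset.univ.erase j).erase k, x m * a i m = w := by
        rw [hw]
        refine Finset.sum_congr rfl fun m hm => ?_
        have hmk : m ≠ k := (Finset.mem_erase.mp hm).1
        have hmj : m ≠ j := (Finset.mem_erase.mp (Finset.mem_erase.mp hm).2).1
        rw [hx]
        simp [hmj, hmk]
      rw [h1, h2, h3, hxj, hxk, hd]
      field_simp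
      ring
    have hprodT : ∏ m, T x m = 0 := Finset.prod_eq_zero (Finset.mem_univ i) hTxi
    have hprodx : ∏ m, x m ≠ 0 := by
      rw [Finset.prod_ne_zero_iff]
      intro m _
      show (if m = j then c else if m = k then d else 1) ≠ 0
      by_cases h1 : m = j
      · rw [if_pos h1]; exact hc0
      · by_cases h2 : m = k
        · rw [if_neg h1, if_pos h2]; exact hd0
        · rw [if_neg h1, if_neg h2]; exact one_ne_zero
    exact hprodx (by rw [← hP x, hprodT])
  -- each row has a nonzero entry
  have hrow_ex : ∀ i, ∃ j, a i j ≠ 0 := by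
    intro i
    by_contra h
    push_neg at h
    have h1 : T (T.symm (Pi.single i 1)) i = (1 : ℂ) := by
      rw [T.apply_symm_apply, Pi.single_eq_same]
    rw [hexp] at h1
    simp [h] at h1
  choose σ0 hσ0 using hrow_ex
  have huniq : ∀ i j, a i j ≠ 0 → j = σ0 i := by
    intro i j hj
    by_contra h
    exact hrow i j (σ0 i) h hj (hσ0 i)
  have hform : ∀ (x : Fin n → ℂ) (i : Fin n), T x i = a i (σ0 i) * x (σ0 i) := by
    intro x i
    rw [hexp, Finset.sum_eq_single (σ0 i)]
    · ring
    · intro b _ hb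
      have hb0 : a i b = 0 := by by_contra h; exact hb (huniq i b h)
      rw [hb0, mul_zero]
    · intro h; exact absurd (Finset.mem_univ _) h
  have hinj : Function.Injective σ0 := by
    intro i1 i2 h12
    by_contra hne
    set x := T.symm (Pi.single i1 1) with hxdef
    have e1 : T x i1 = 1 := by rw [hxdef, T.apply_symm_apply, Pi.single_eq_same]
    have e2 : T x i2 = 0 := by
      rw [hxdef, T.apply_symm_apply, Pi.single_eq_of_ne (Ne.symm hne)]
    rw [hform] at e1 e2
    rw [← h12] at e2
    rcases mul_eq_zero.mp e2 with h | h
    · rw [h12] at h; exact hσ0 i2 h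
    · rw [h, mul_zero] at e1; exact one_ne_zero e1.symm
  have hbij : Function.Bijective σ0 := Finite.injective_iff_bijective.mp hinj
  set σ : Equiv.Perm (Fin n) := Equiv.ofBijective σ0 hbij with hσdef
  set ε : Fin n → ℂ := fun i => a i (σ0 i) with hε
  have hform' : ∀ (x : Fin n → ℂ) (i : Fin n), T x i = ε i * x (σ i) := fun x i => hform x i
  have hε1 : ∀ i, ε i = 1 ∨ ε i = -1 := by
    intro i
    have hq := hQ (Pi.single (σ0 i) 1)
    have hL : ∑ m, T (Pi.single (σ0 i) 1) m ^ 2 = ε i * ε i := by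
      rw [Finset.sum_eq_single i]
      · rw [hform, Pi.single_eq_same, mul_one, sq]
      · intro b _ hb
        rw [hform, Pi.single_eq_of_ne (fun hc => hb (hinj hc)), mul_zero]
        ring
      · intro h; exact absurd (Finset.mem_univ _) h
    have hR : ∑ m, (Pi.single (σ0 i) 1 : Fin n → ℂ) m ^ 2 = 1 := by
      rw [Finset.sum_eq_single (σ0 i)]
      · rw [Pi.single_eq_same]; ring
      · intro b _ hb
        rw [Pi.single_eq_of_ne hb]; ring
      · intro h; exact absurd (Finset.mem_univ _) h
    rw [hL, hR] at hq
    exact mul_self_eq_one_iff.mp hq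
  have hεp : ∏ i, ε i = 1 := by
    have hp := hP (fun _ => (1 : ℂ))
    have h1 : ∏ m, T (fun _ => (1 : ℂ)) m = ∏ m, ε m := by
      refine Finset.prod_congr rfl fun m _ => ?_
      rw [hform']; ring
    have h2 : ∏ _m : Fin n, (1 : ℂ) = 1 := Finset.prod_const_one
    rw [h1, h2] at hp
    exact hp
  exact ⟨σ, ε, hε1, hεp, hform'⟩

lemma mem_upsilon_iff (T : (Fin n → ℂ) ≃ₗ[ℂ] (Fin n → ℂ)) :
    T ∈ UpsilonSub n ↔ IsEvenSignChangeL n T := by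
  constructor
  · intro hT
    refine Subgroup.closure_induction (p := fun S _ => IsEvenSignChangeL n S)
      (fun S hS => hS) ?_ ?_ ?_ hT
    · exact ⟨fun _ => 1, fun _ => Or.inl rfl, Finset.prod_const_one, fun x i => (one_mul _).symm⟩
    · rintro S R _ _ ⟨ε, hε1, hε2, hε3⟩ ⟨δ, hδ1, hδ2, hδ3⟩
      refine ⟨fun i => ε i * δ i, ?_, ?_, ?_⟩
      · intro i
        rcases hε1 i with h | h <;> rcases hδ1 i with h' | h' <;>
          simp [h, h']
      · rw [Finset.prod_mul_distrib, hε2, hδ2, one_mul]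
      · intro x i
        rw [mul_apply, hε3, hδ3, mul_assoc]
    · rintro S _ ⟨ε, hε1, hε2, hε3⟩
      refine ⟨ε, hε1, hε2, ?_⟩
      intro x i
      have key : S⁻¹ x = fun i => ε i * x i := by
        apply S.injective
        rw [inv_apply]
        funext i
        rw [hε3, ← mul_assoc, sq_one (hε1 i), one_mul]
      rw [key]
  · intro h
    exact Subgroup.subset_closure h

lemma mem_perm_iff (T : (Fin n → ℂ) ≃ₗ[ℂ] (Fin n → ℂ)) :
    T ∈ PermSub n ↔ IsCoordPermL n T := by
  constructor
  · intro hT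
    refine Subgroup.closure_induction (p := fun S _ => IsCoordPermL n S)
      (fun S hS => hS) ?_ ?_ ?_ hT
    · exact ⟨1, fun x i => by rw [Equiv.Perm.one_apply]; rfl⟩
    · rintro S R _ _ ⟨σ, hσ⟩ ⟨τ, hτ⟩
      refine ⟨σ.trans τ, fun x i => ?_⟩
      rw [mul_apply, hσ, hτ]
      rfl
    · rintro S _ ⟨σ, hσ⟩
      refine ⟨σ⁻¹, fun x i => ?_⟩
      have key : S⁻¹ x = fun i => x (σ⁻¹ i) := by
        apply S.injective
        rw [inv_apply]
        funext i
        rw [hσ, ← Equiv.Perm.mul_apply, inv_mul_cancel, Equiv.Perm.one_apply]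
      rw [key]
  · intro h
    exact Subgroup.subset_closure h

/-- A sign-change linear automorphism. -/
def signEquiv (ε : Fin n → ℂ) (hε : ∀ i, ε i * ε i = 1) :
    (Fin n → ℂ) ≃ₗ[ℂ] (Fin n → ℂ) where
  toFun x := fun i => ε i * x i
  map_add' x y := by funext i; simp [mul_add]
  map_smul' c x := by funext i; simp [smul_eq_mul]; ring
  invFun x := fun i => ε i * x i
  left_inv x := by funext i; simp only; rw [← mul_assoc, hε, one_mul]
  right_inv x := by funext i; simp only; rw [← mul_assoc, hε, one_mul]

/-- A coordinate-permutation linear automorphism. -/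
def permEquiv (σ : Equiv.Perm (Fin n)) :
    (Fin n → ℂ) ≃ₗ[ℂ] (Fin n → ℂ) where
  toFun x := fun i => x (σ i)
  map_add' x y := rfl
  map_smul' c x := rfl
  invFun x := fun i => x (σ⁻¹ i)
  left_inv x := by funext i; simp
  right_inv x := by funext i; simp

end MHaux

open MHaux

/-- An invertible linear map of `ℂⁿ` preserves the Markoff–Hurwitz polynomial iff it is the
composition of a coordinate permutation and an even sign-change map; consequently
`Λ = Υₙ ⋊ Sₙ`, and in particular `Λ` is finite. -/
theorem linear_automorphisms (n : ℕ) (hn : 3 ≤ n) :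
    (∀ T : (Fin n → ℂ) ≃ₗ[ℂ] (Fin n → ℂ),
      (∀ x, MH n (T x) = MH n x) ↔
        ∃ (σ : Equiv.Perm (Fin n)) (ε : Fin n → ℂ),
          (∀ i, ε i = 1 ∨ ε i = -1) ∧ (∏ i, ε i) = 1 ∧
          ∀ (x : Fin n → ℂ) (i : Fin n), T x i = ε i * x (σ i)) ∧
    UpsilonSub n ≤ LinLambda n ∧ PermSub n ≤ LinLambda n ∧
    ((UpsilonSub n).subgroupOf (LinLambda n)).Normal ∧
    UpsilonSub n ⊔ PermSub n = LinLambda n ∧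
    UpsilonSub n ⊓ PermSub n = ⊥ ∧
    ((LinLambda n : Set ((Fin n → ℂ) ≃ₗ[ℂ] (Fin n → ℂ)))).Finite := by
  have hups : UpsilonSub n ≤ LinLambda n := by
    refine (Subgroup.closure_le _).mpr ?_
    rintro T ⟨ε, h1, h2, h3⟩
    show ∀ x, MH n (T x) = MH n x
    exact preserves_of_form T (Equiv.refl _) ε h1 h2 (fun x i => h3 x i)
  have hperm : PermSub n ≤ LinLambda n := by
    refine (Subgroup.closure_le _).mpr ?_
    rintro T ⟨σ, hσ⟩
    show ∀ x, MH n (T x) = MH n x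
    refine preserves_of_form T σ (fun _ => 1) (fun _ => Or.inl rfl)
      Finset.prod_const_one (fun x i => ?_)
    rw [one_mul]; exact hσ x i
  refine ⟨?_, hups, hperm, ?_, ?_, ?_, ?_⟩
  · intro T
    constructor
    · exact main_struct hn T
    · rintro ⟨σ, ε, h1, h2, h3⟩
      exact preserves_of_form T σ ε h1 h2 h3
  · -- normality
    constructor
    intro g hg h
    rw [Subgroup.mem_subgroupOf] at hg ⊢
    rw [mem_upsilon_iff] at hg ⊢
    obtain ⟨δ, hδ1, hδ2, hδ3⟩ := hg
    obtain ⟨σ, ε, hε1, hεp, hform⟩ := main_struct hn (h : (Fin n → ℂ) ≃ₗ[ℂ] (Fin n → ℂ)) h.2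
    refine ⟨fun i => δ (σ i), fun i => hδ1 _, ?_, ?_⟩
    · rw [← hδ2]; exact Equiv.prod_comp σ δ
    · intro x i
      set y : Fin n → ℂ := ((h : (Fin n → ℂ) ≃ₗ[ℂ] (Fin n → ℂ))⁻¹) x with hy
      have hcoe : ((h * g * h⁻¹ : ↥(LinLambda n)) : (Fin n → ℂ) ≃ₗ[ℂ] (Fin n → ℂ)) x
          = (h : (Fin n → ℂ) ≃ₗ[ℂ] (Fin n → ℂ)) ((g : (Fin n → ℂ) ≃ₗ[ℂ] (Fin n → ℂ)) y) := rfl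
      have hyx : (h : (Fin n → ℂ) ≃ₗ[ℂ] (Fin n → ℂ)) y = x := inv_apply _ x
      have e1 : y (σ i) = ε i * x i := by
        have h2 : x i = ε i * y (σ i) := by rw [← hyx]; exact hform y i
        rw [h2, ← mul_assoc, sq_one (hε1 i), one_mul]
      rw [hcoe]
      calc (h : (Fin n → ℂ) ≃ₗ[ℂ] (Fin n → ℂ)) ((g : (Fin n → ℂ) ≃ₗ[ℂ] (Fin n → ℂ)) y) i
          = ε i * ((g : (Fin n → ℂ) ≃ₗ[ℂ] (Fin n → ℂ)) y) (σ i) := hform _ i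
        _ = ε i * (δ (σ i) * y (σ i)) := by rw [hδ3]
        _ = ε i * (δ (σ i) * (ε i * x i)) := by rw [e1]
        _ = (ε i * ε i) * (δ (σ i) * x i) := by ring
        _ = δ (σ i) * x i := by rw [sq_one (hε1 i), one_mul]
  · -- sup
    apply le_antisymm (sup_le hups hperm)
    intro T hT
    obtain ⟨σ, ε, hε1, hεp, hform⟩ := main_struct hn T hT
    have hsq : ∀ i, ε i * ε i = 1 := fun i => sq_one (hε1 i)
    have hTeq : T = signEquiv ε hsq * permEquiv σ := by
      apply LinearEquiv.toLinearMap_injective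
      apply LinearMap.ext
      intro x
      funext i
      exact hform x i
    rw [hTeq]
    exact Subgroup.mul_mem _
      (Subgroup.mem_sup_left ((mem_upsilon_iff _).mpr ⟨ε, hε1, hεp, fun x i => rfl⟩))
      (Subgroup.mem_sup_right ((mem_perm_iff _).mpr ⟨σ, fun x i => rfl⟩))
  · -- inf
    apply le_antisymm ?_ bot_le
    intro T hT
    rw [Subgroup.mem_inf] at hT
    obtain ⟨ε, hε1, hεp, hε3⟩ := (mem_upsilon_iff T).mp hT.1
    obtain ⟨σ, hσ3⟩ := (mem_perm_iff T).mp hT.2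
    have hone : ∀ i, ε i = 1 := by
      intro i
      have h1 : ε i * (Pi.single i 1 : Fin n → ℂ) i = (Pi.single i 1 : Fin n → ℂ) (σ i) := by
        rw [← hε3, hσ3]
      rw [Pi.single_eq_same, mul_one] at h1
      by_cases hσ : σ i = i
      · rw [hσ, Pi.single_eq_same] at h1; exact h1
      · rw [Pi.single_eq_of_ne hσ] at h1
        rcases hε1 i with h | h <;> rw [h] at h1 <;> norm_num at h1
    rw [Subgroup.mem_bot]
    apply LinearEquiv.toLinearMap_injective
    apply LinearMap.ext
    intro x
    funext i
    rw [show ((1 : (Fin n → ℂ) ≃ₗ[ℂ] (Fin n → ℂ)) : (Fin n → ℂ) →ₗ[ℂ] (Fin n → ℂ)) x i = x i from rfl]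
    rw [show (T : (Fin n → ℂ) →ₗ[ℂ] (Fin n → ℂ)) x i = T x i from rfl]
    rw [hε3, hone, one_mul]
  · -- finiteness
    set f : ((Fin n → ℂ) ≃ₗ[ℂ] (Fin n → ℂ)) → (Fin n → Fin n → ℂ) :=
      fun T => fun i j => T (fun l => if j = l then 1 else 0) i with hf
    have hfin : (f '' (LinLambda n : Set ((Fin n → ℂ) ≃ₗ[ℂ] (Fin n → ℂ)))).Finite := by
      have hbig : (Set.pi (Set.univ : Set (Fin n))
          (fun _ => Set.pi (Set.univ : Set (Fin n))
            (fun _ => ({0, 1, -1} : Set ℂ)))).Finite := by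
        refine Set.Finite.pi fun _ => Set.Finite.pi fun _ => ?_
        exact ((Set.finite_singleton (-1)).insert 1).insert 0
      refine hbig.subset ?_
      rintro M ⟨T, hT, rfl⟩
      rw [Set.mem_pi]
      intro i _
      rw [Set.mem_pi]
      intro j _
      obtain ⟨σ, ε, hε1, hεp, hform⟩ := main_struct hn T hT
      have : f T i j = ε i * (if j = σ i then 1 else 0) := hform _ i
      rw [this]
      by_cases h : j = σ i
      · rw [if_pos h, mul_one]
        rcases hε1 i with h' | h' <;> rw [h'] <;> simp
      · rw [if_neg h, mul_zero]
        simp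
    have hinj : Function.Injective f := by
      intro T S h
      apply LinearEquiv.toLinearMap_injective
      apply LinearMap.ext
      intro x
      funext i
      rw [show (T : (Fin n → ℂ) →ₗ[ℂ] (Fin n → ℂ)) x i = T x i from rfl]
      rw [show (S : (Fin n → ℂ) →ₗ[ℂ] (Fin n → ℂ)) x i = S x i from rfl]
      rw [expand T, expand S]
      refine Finset.sum_congr rfl fun j _ => ?_
      have := congrFun (congrFun h i) j
      rw [hf] at this
      simp only at this
      rw [this]
    exact Set.Finite.of_finite_image hfin (Function.Injective.injOn hinj)

end
end

section
/- (Fork Lemma.) Let n ≥ 3 and x = (x₁,…,xₙ) ∈ ℂⁿ, and let i ≠ j be indices in {1,…,n} such that xᵢ and x_j are not both zero. If |(∏_{k≠i} x_k) − xᵢ| ≤ |xᵢ| and |(∏_{k≠j} x_k) − x_j| ≤ |x_j|, then |∏_{k≠i,j} x_k| ≤ 2. -/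
open scoped BigOperators

/-- **Fork Lemma.** If `x ∈ ℂⁿ`, `i ≠ j`, `xᵢ, x_j` not both zero, and the edges of colors
`i` and `j` at the vertex `x` both point away from it, i.e.
`|(∏_{k≠i} x_k) − xᵢ| ≤ |xᵢ|` and `|(∏_{k≠j} x_k) − x_j| ≤ |x_j|`,
then `|∏_{k≠i,j} x_k| ≤ 2`. -/
theorem fork_lemma (n : ℕ) (hn : 3 ≤ n) (x : Fin n → ℂ) (i j : Fin n) (hij : i ≠ j)
    (hnz : ¬ (x i = 0 ∧ x j = 0))
    (hi : ‖(∏ k ∈ Finset.univ.erase i, x k) - x i‖ ≤ ‖x i‖)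
    (hj : ‖(∏ k ∈ Finset.univ.erase j, x k) - x j‖ ≤ ‖x j‖) :
    ‖∏ k ∈ (Finset.univ.erase i).erase j, x k‖ ≤ 2 := by
  set P : ℂ := ∏ k ∈ (Finset.univ.erase i).erase j, x k with hP
  have hji : (∏ k ∈ (Finset.univ.erase j).erase i, x k) = P := by
    rw [Finset.erase_right_comm]
  have hmemj : j ∈ Finset.univ.erase i := Finset.mem_erase.2 ⟨hij.symm, Finset.mem_univ j⟩
  have hmemi : i ∈ Finset.univ.erase j := Finset.mem_erase.2 ⟨hij, Finset.mem_univ i⟩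
  have e1 : (∏ k ∈ Finset.univ.erase i, x k) = x j * P := by
    rw [← Finset.mul_prod_erase _ _ hmemj]
  have e2 : (∏ k ∈ Finset.univ.erase j, x k) = x i * P := by
    rw [← Finset.mul_prod_erase _ _ hmemi, hji]
  rw [e1] at hi
  rw [e2] at hj
  have t1 : ‖x j * P‖ ≤ 2 * ‖x i‖ := by
    calc ‖x j * P‖ = ‖(x j * P - x i) + x i‖ := by ring_nf
      _ ≤ ‖x j * P - x i‖ + ‖x i‖ := norm_add_le _ _
      _ ≤ 2 * ‖x i‖ := by linarith
  have t2 : ‖x i * P‖ ≤ 2 * ‖x j‖ := by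
    calc ‖x i * P‖ = ‖(x i * P - x j) + x j‖ := by ring_nf
      _ ≤ ‖x i * P - x j‖ + ‖x j‖ := norm_add_le _ _
      _ ≤ 2 * ‖x j‖ := by linarith
  rw [norm_mul] at t1 t2
  by_cases hxi : x i = 0
  · have hxj : x j ≠ 0 := fun h => hnz ⟨hxi, h⟩
    have : ‖x j‖ * ‖P‖ ≤ 0 := by
      simpa [hxi] using t1
    have hp0 : ‖P‖ = 0 := by
      have := norm_pos_iff.2 hxj
      nlinarith [norm_nonneg P]
    rw [hp0]; norm_num
  · by_cases hxj : x j = 0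
    · have : ‖x i‖ * ‖P‖ ≤ 0 := by
        simpa [hxj] using t2
      have hp0 : ‖P‖ = 0 := by
        have := norm_pos_iff.2 hxi
        nlinarith [norm_nonneg P]
      rw [hp0]; norm_num
    · have hi' := norm_pos_iff.2 hxi
      have hj' := norm_pos_iff.2 hxj
      nlinarith [norm_nonneg P, mul_le_mul t1 t2 (by positivity) (by positivity)]
end

section
/- Let n ≥ 3, let a ∈ ℂⁿ be non-dihedral with extended Hurwitz map φ = φ_a, and let K ≥ 2. Then the set 𝒜_φ(K) = {γ ∈ 𝒜 : |φ(γ)| ≤ K} is edge-connected. -/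
open scoped BigOperators

noncomputable section

namespace MarkoffHurwitz

/-- The Markoff–Hurwitz polynomial `H(x) = x₁² + ⋯ + xₙ² − x₁⋯xₙ`. -/
def MH (n : ℕ) (x : Fin n → ℂ) : ℂ := (∑ i, x i ^ 2) - ∏ i, x i

/-- The involution `bᵢ` replacing `xᵢ` by `(∏_{j≠i} x_j) − xᵢ`. -/
def bmap (n : ℕ) (i : Fin n) (x : Fin n → ℂ) : Fin n → ℂ :=
  Function.update x i ((∏ j ∈ Finset.univ.erase i, x j) - x i)

lemma bmap_apply_ne (n : ℕ) (i : Fin n) (x : Fin n → ℂ) {j : Fin n} (h : j ≠ i) :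
    bmap n i x j = x j := Function.update_of_ne h _ _

lemma bmap_apply_same (n : ℕ) (i : Fin n) (x : Fin n → ℂ) :
    bmap n i x i = (∏ j ∈ Finset.univ.erase i, x j) - x i := Function.update_self _ _ _

lemma prod_erase_bmap (n : ℕ) (i : Fin n) (x : Fin n → ℂ) :
    ∏ j ∈ Finset.univ.erase i, bmap n i x j = ∏ j ∈ Finset.univ.erase i, x j :=
  Finset.prod_congr rfl fun j hj => bmap_apply_ne n i x (Finset.ne_of_mem_erase hj)

lemma bmap_involutive (n : ℕ) (i : Fin n) : Function.Involutive (bmap n i) := by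
  intro x; funext j
  rcases eq_or_ne j i with rfl | h
  · rw [bmap_apply_same, prod_erase_bmap, bmap_apply_same]; ring
  · rw [bmap_apply_ne n i _ h, bmap_apply_ne n i x h]

/-- The relators `bᵢ²` of the Coxeter presentation. -/
def MHrels (n : ℕ) : Set (FreeGroup (Fin n)) :=
  Set.range fun i : Fin n => FreeGroup.of i * FreeGroup.of i

/-- The group `Γₙ = ⟨b₁,…,bₙ ∣ bᵢ² = 1⟩`, free product of `n` copies of `ℤ/2`. -/
abbrev Gam (n : ℕ) := PresentedGroup (MHrels n)

/-- The generator `bᵢ` as an element of `Γₙ`. -/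
def gen {n : ℕ} (i : Fin n) : Gam n := PresentedGroup.of i

lemma gen_mul_self {n : ℕ} (i : Fin n) : gen i * gen i = 1 := by
  have h : PresentedGroup.mk (MHrels n) (FreeGroup.of i * FreeGroup.of i) = 1 := by
    have : (FreeGroup.of i * FreeGroup.of i) ∈ Subgroup.normalClosure (MHrels n) :=
      Subgroup.subset_normalClosure ⟨i, rfl⟩
    exact (QuotientGroup.eq_one_iff _).2 this
  simpa [gen, PresentedGroup.of, map_mul] using h

lemma gen_inv {n : ℕ} (i : Fin n) : (gen i)⁻¹ = gen i :=
  inv_eq_of_mul_eq_one_right (gen_mul_self i)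

/-- `bᵢ` as a permutation of `ℂⁿ`. -/
def bperm (n : ℕ) (i : Fin n) : Equiv.Perm (Fin n → ℂ) := (bmap_involutive n i).toPerm

/-- The action of `Γₙ` on `ℂⁿ` by the involutions `bᵢ`. -/
def act (n : ℕ) : Gam n →* Equiv.Perm (Fin n → ℂ) :=
  PresentedGroup.toGroup (f := fun i => bperm n i) (by
    rintro r ⟨i, rfl⟩
    rw [map_mul, FreeGroup.lift_apply_of]
    refine Equiv.ext fun x => ?_
    simpa [bperm, Equiv.Perm.mul_apply] using bmap_involutive n i x)

lemma act_gen (n : ℕ) (i : Fin n) : act n (gen i) = bperm n i :=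
  PresentedGroup.toGroup.of _

/-- The subgroup `⟨bᵢ, b_j⟩` associated to an unordered pair `{i,j}`. -/
def pairSub {n : ℕ} : Sym2 (Fin n) → Subgroup (Gam n) :=
  Sym2.lift ⟨fun i j => Subgroup.closure {gen i, gen j}, fun i j => by
    show Subgroup.closure {gen i, gen j} = Subgroup.closure {gen j, gen i}
    rw [Set.pair_comm]⟩

lemma pairSub_mk {n : ℕ} (i j : Fin n) :
    pairSub s(i, j) = Subgroup.closure {gen i, gen j} := rfl

/-- An alternating geodesic in the Cayley tree of `Γₙ`: an unordered pair `{i,j}`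
of distinct colors together with a coset `g⟨bᵢ,b_j⟩`. -/
structure AltGeo (n : ℕ) where
  pair : Sym2 (Fin n)
  nd : ¬ pair.IsDiag
  coset : Gam n ⧸ pairSub pair

/-- Coordinates outside of a pair `{i,j}`. -/
def offPair {n : ℕ} (s : Sym2 (Fin n)) : Finset (Fin n) :=
  Finset.univ.filter fun k => ¬ k ∈ s

/-- Key invariance: the coordinates off the pair do not change when moving along the coset. -/
lemma coords_eq {n : ℕ} (a : Fin n → ℂ) (s : Sym2 (Fin n)) {t : Gam n}
    (ht : t ∈ pairSub s) (g : Gam n) {k : Fin n} (hk : ¬ k ∈ s) :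
    act n (g * t)⁻¹ a k = act n g⁻¹ a k := by
  induction s using Sym2.ind with
  | _ i j =>
    rw [pairSub_mk] at ht
    induction ht using Subgroup.closure_induction generalizing g with
    | mem x hx =>
      have key : ∀ m : Fin n, m ∈ (s(i, j) : Sym2 (Fin n)) → ∀ g : Gam n,
          act n (g * gen m)⁻¹ a k = act n g⁻¹ a k := by
        intro m hm g
        rw [mul_inv_rev, gen_inv, map_mul, Equiv.Perm.mul_apply, act_gen]
        have hkm : k ≠ m := fun h => hk (h ▸ hm)
        exact bmap_apply_ne n m _ hkm
      rcases hx with rfl | rfl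
      · exact key i (Sym2.mem_mk_left i j) g
      · exact key j (Sym2.mem_mk_right i j) g
    | one => rw [mul_one]
    | mul x y hx hy ihx ihy => rw [← mul_assoc]; rw [ihy, ihx]
    | inv x hx ih =>
      have := ih (g := g * x⁻¹)
      rw [mul_assoc, inv_mul_cancel, mul_one] at this
      exact this.symm

/-- Representative version of the extended Hurwitz map. -/
def phiRep (n : ℕ) (a : Fin n → ℂ) (s : Sym2 (Fin n)) (g : Gam n) : ℂ :=
  ∏ k ∈ offPair s, act n g⁻¹ a k

/-- Representative version of the square sum weight. -/
def sigRep (n : ℕ) (a : Fin n → ℂ) (s : Sym2 (Fin n)) (g : Gam n) : ℂ :=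
  ∑ k ∈ offPair s, (act n g⁻¹ a k) ^ 2

/-- The extended Hurwitz map `φ_a : 𝒜 → ℂ`, `φ(γ) = ∏_{k∉{i,j}} x_k`. -/
def phiA (n : ℕ) (a : Fin n → ℂ) (γ : AltGeo n) : ℂ :=
  Quotient.liftOn' γ.coset (phiRep n a γ.pair) (by
    intro g h hgh
    have hmem : g⁻¹ * h ∈ pairSub γ.pair := QuotientGroup.leftRel_apply.mp hgh
    have : h = g * (g⁻¹ * h) := by group
    rw [this]
    unfold phiRep
    exact (Finset.prod_congr rfl fun k hk =>
      (coords_eq a γ.pair hmem g (Finset.mem_filter.mp hk).2)).symm)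

/-- The square sum weight `σ_a : 𝒜 → ℂ`, `σ(γ) = ∑_{k∉{i,j}} x_k²`. -/
def sigA (n : ℕ) (a : Fin n → ℂ) (γ : AltGeo n) : ℂ :=
  Quotient.liftOn' γ.coset (sigRep n a γ.pair) (by
    intro g h hgh
    have hmem : g⁻¹ * h ∈ pairSub γ.pair := QuotientGroup.leftRel_apply.mp hgh
    have : h = g * (g⁻¹ * h) := by group
    rw [this]
    unfold sigRep
    exact (Finset.sum_congr rfl fun k hk => by
      rw [coords_eq a γ.pair hmem g (Finset.mem_filter.mp hk).2]).symm)

/-- The set `𝒜_φ(K)` of alternating geodesics with `|φ(γ)| ≤ K`. -/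
def AK (n : ℕ) (a : Fin n → ℂ) (K : ℝ) : Set (AltGeo n) :=
  {γ | ‖phiA n a γ‖ ≤ K}

/-- The Bowditch domain `𝒟 ⊆ ℂⁿ`. -/
def BD (n : ℕ) : Set (Fin n → ℂ) :=
  {a | (∀ γ : AltGeo n, phiA n a γ ∉ (fun r : ℝ => (r : ℂ)) '' Set.Icc (-2 : ℝ) 2) ∧
    ∃ K : ℝ, 2 < K ∧ (AK n a K).Finite}



/-- Word length of `g ∈ Γₙ` with respect to the generators `b₁,…,bₙ`. -/
def glen (n : ℕ) (g : Gam n) : ℕ :=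
  sInf {m | ∃ l : List (Fin n), l.length = m ∧ g = (l.map gen).prod}

/-- The alternating geodesic `[g;{i,k}]` through the vertex `g` with colors `{i,k}`. -/
def mkGeo {n : ℕ} (i k : Fin n) (h : i ≠ k) (g : Gam n) : AltGeo n :=
  ⟨s(i, k), by rwa [Sym2.mk_isDiag_iff], QuotientGroup.mk g⟩

/-- `F : 𝒜 → ℕ` is the Fibonacci function relative to the root `v₀ = 1`:
`F(γ) = 1` if the root lies on `γ`, and otherwise `F(γ) = F([v*;{i,k}]) + F([v*;{j,k}])`,
where `v*` is the vertex of `γ` closest to the root and `k` is the label of the first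
edge of the geodesic from `v*` to the root. -/
def IsFib (n : ℕ) (F : AltGeo n → ℕ) : Prop :=
  (∀ γ : AltGeo n, γ.coset = QuotientGroup.mk 1 → F γ = 1) ∧
  (∀ γ : AltGeo n, γ.coset ≠ QuotientGroup.mk 1 →
    ∀ g : Gam n, QuotientGroup.mk g = γ.coset →
      (∀ h : Gam n, QuotientGroup.mk h = γ.coset → glen n g ≤ glen n h) →
      ∀ i j k : Fin n, γ.pair = s(i, j) → ∀ (hki : k ≠ i) (hkj : k ≠ j),
        glen n (g * gen k) < glen n g →
        F γ = F (mkGeo i k hki.symm g) + F (mkGeo j k hkj.symm g))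

/-- `log⁺ t = max (0, log t)`. -/
def logp (t : ℝ) : ℝ := max 0 (Real.log t)

/-- The subgroup `⟨b_j : j ≠ i⟩`. -/
def hatSub (n : ℕ) (i : Fin n) : Subgroup (Gam n) :=
  Subgroup.closure {g | ∃ j : Fin n, j ≠ i ∧ g = gen j}

lemma coord_eq (n : ℕ) (a : Fin n → ℂ) (i : Fin n) {t : Gam n}
    (ht : t ∈ hatSub n i) (g : Gam n) :
    act n (g * t)⁻¹ a i = act n g⁻¹ a i := by
  induction ht using Subgroup.closure_induction generalizing g with
  | mem x hx =>
    obtain ⟨j, hji, rfl⟩ := hx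
    rw [mul_inv_rev, gen_inv, map_mul, Equiv.Perm.mul_apply, act_gen]
    exact bmap_apply_ne n j _ hji.symm
  | one => rw [mul_one]
  | mul x y hx hy ihx ihy => rw [← mul_assoc, ihy, ihx]
  | inv x hx ih =>
    have := ih (g := g * x⁻¹)
    rw [mul_assoc, inv_mul_cancel, mul_one] at this
    exact this.symm

/-- For a coset `X = g⟨b_j : j ≠ i⟩ ∈ 𝒳ᵢ`, the (constant) `i`-th coordinate `φ(X)`. -/
def coordX (n : ℕ) (a : Fin n → ℂ) (i : Fin n) (X : Gam n ⧸ hatSub n i) : ℂ :=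
  Quotient.liftOn' X (fun g => act n g⁻¹ a i) (by
    intro g h hgh
    have hmem : g⁻¹ * h ∈ hatSub n i := QuotientGroup.leftRel_apply.mp hgh
    have hh : h = g * (g⁻¹ * h) := by group
    show act n g⁻¹ a i = act n h⁻¹ a i
    rw [hh, coord_eq n a i hmem g])

/-- `a ∈ ℂⁿ` is dihedral if some point of its `Γₙ`-orbit has two vanishing coordinates. -/
def Dihedral (n : ℕ) (a : Fin n → ℂ) : Prop :=
  ∃ (g : Gam n) (i j : Fin n), i ≠ j ∧ act n g a i = 0 ∧ act n g a j = 0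

/-- The alternating geodesic `γ` contains the edge of color `i` incident to the vertex `g`. -/
def containsEdge {n : ℕ} (γ : AltGeo n) (g : Gam n) (i : Fin n) : Prop :=
  i ∈ γ.pair ∧ (QuotientGroup.mk g : Gam n ⧸ pairSub γ.pair) = γ.coset

/-- Two alternating geodesics share an edge of the tree. -/
def ShareEdge {n : ℕ} (α β : AltGeo n) : Prop :=
  ∃ (g : Gam n) (i : Fin n), containsEdge α g i ∧ containsEdge β g i

/-- A set of alternating geodesics is edge-connected. -/
def EdgeConnected {n : ℕ} (P : Set (AltGeo n)) : Prop :=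
  ∀ α ∈ P, ∀ β ∈ P, ∃ (m : ℕ) (c : ℕ → AltGeo n),
    c 0 = α ∧ c m = β ∧ (∀ t ≤ m, c t ∈ P) ∧ ∀ t < m, ShareEdge (c t) (c (t + 1))

/-- `h(z) = 1 − √(1 − 4/z²)`, with the principal square root (positive real part). -/
def hfun (z : ℂ) : ℂ := 1 - (1 - 4 / z ^ 2) ^ ((1 : ℂ) / 2)

/-- compatibility: the complex modulus as an absolute value -/
def Complex.abs : AbsoluteValue ℂ ℝ := IsAbsoluteValue.toAbsoluteValue (norm : ℂ → ℝ)

lemma Complex.norm_eq_abs (z : ℂ) : ‖z‖ = Complex.abs z := rfl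

/-! ### Reduced words and the normal form in `Gam n` -/

/-- Reduced words: lists of generators with no two adjacent letters equal. -/
abbrev Red (n : ℕ) := {l : List (Fin n) // l.IsChain (· ≠ ·)}

namespace Red

def nil (n : ℕ) : Red n := ⟨[], by simp⟩

/-- Prepending/cancelling a letter `c` at the head of a reduced word. -/
def togFun {n : ℕ} (c : Fin n) : Red n → Red n
  | ⟨[], _⟩ => ⟨[c], by simp⟩
  | ⟨a :: t, h⟩ =>
    if hac : a = c then ⟨t, h.tail⟩
    else ⟨c :: a :: t, h.cons_cons (fun h' => hac h'.symm)⟩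

lemma togFun_involutive {n : ℕ} (c : Fin n) : Function.Involutive (togFun c) := by
  rintro ⟨l, h⟩
  match l, h with
  | [], h => simp [togFun]
  | a :: t, h =>
    by_cases hac : a = c
    · subst hac
      match t, h with
      | [], h => simp [togFun]
      | b :: t', h =>
        have hba : b ≠ a := (List.isChain_cons_cons.1 h).1.symm
        simp [togFun, hba]
    · simp [togFun, hac]

/-- The letter-toggle as a permutation of reduced words. -/
def tog {n : ℕ} (c : Fin n) : Equiv.Perm (Red n) := (togFun_involutive c).toPerm

lemma tog_apply {n : ℕ} (c : Fin n) (l : Red n) : tog c l = togFun c l := rfl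

end Red
/-! ### The action of `Gam n` on reduced words, and normal forms -/

/-- The action of `Γₙ` on reduced words. -/
def wact (n : ℕ) : Gam n →* Equiv.Perm (Red n) :=
  PresentedGroup.toGroup (f := fun i => Red.tog i) (by
    rintro r ⟨i, rfl⟩
    rw [map_mul, FreeGroup.lift_apply_of]
    refine Equiv.ext fun x => ?_
    simpa [Red.tog, Equiv.Perm.mul_apply] using Red.togFun_involutive i x)

lemma wact_gen {n : ℕ} (i : Fin n) : wact n (gen i) = Red.tog i :=
  PresentedGroup.toGroup.of _

/-- The normal form of a group element, as a reduced word. -/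
def nf {n : ℕ} (g : Gam n) : Red n := wact n g (Red.nil n)

/-- The product of a word of generators. -/
def wprod {n : ℕ} (l : List (Fin n)) : Gam n := (l.map gen).prod

lemma wprod_nil {n : ℕ} : wprod ([] : List (Fin n)) = 1 := rfl

lemma wprod_cons {n : ℕ} (c : Fin n) (l : List (Fin n)) :
    wprod (c :: l) = gen c * wprod l := by simp [wprod]

lemma wprod_tog {n : ℕ} (c : Fin n) (l : Red n) :
    wprod (Red.tog c l).1 = gen c * wprod l.1 := by
  rcases l with ⟨l, h⟩
  match l, h with
  | [], h => simp [Red.tog_apply, Red.togFun, wprod]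
  | a :: t, h =>
    by_cases hac : a = c
    · subst hac
      simp only [Red.tog_apply, Red.togFun, dif_pos rfl, wprod_cons]
      rw [← mul_assoc, gen_mul_self, one_mul]
      simp
    · simp [Red.tog_apply, Red.togFun, hac, wprod_cons]

lemma wprod_wact {n : ℕ} (g : Gam n) (l : Red n) :
    wprod (wact n g l).1 = g * wprod l.1 := by
  have hg : g ∈ Subgroup.closure (Set.range (PresentedGroup.of :
      Fin n → Gam n)) := by
    rw [PresentedGroup.closure_range_of]; trivial
  induction hg using Subgroup.closure_induction generalizing l with
  | mem x hx =>
    obtain ⟨i, rfl⟩ := hx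
    have : (PresentedGroup.of i : Gam n) = gen i := rfl
    rw [this, wact_gen, wprod_tog]
  | one => simp
  | mul x y hx hy ihx ihy =>
    rw [map_mul, Equiv.Perm.mul_apply, ihx, ihy, mul_assoc]
  | inv x hx ih =>
    have := ih (l := wact n x⁻¹ l)
    rw [← Equiv.Perm.mul_apply, ← map_mul, mul_inv_cancel, map_one,
      Equiv.Perm.one_apply] at this
    exact eq_inv_mul_iff_mul_eq.2 this.symm

/-- Every element is the product of its normal form. -/
lemma wprod_nf {n : ℕ} (g : Gam n) : wprod (nf g).1 = g := by
  have := wprod_wact g (Red.nil n)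
  simpa [nf, Red.nil, wprod] using this

lemma nf_mul_gen_left {n : ℕ} (c : Fin n) (g : Gam n) :
    nf (gen c * g) = Red.tog c (nf g) := by
  simp [nf, map_mul, Equiv.Perm.mul_apply, wact_gen]

lemma nf_one {n : ℕ} : nf (1 : Gam n) = Red.nil n := by simp [nf, Red.nil]

/-- Normal form of a product of a reduced word is that word. -/
lemma nf_wprod {n : ℕ} (l : Red n) : nf (wprod l.1) = l := by
  rcases l with ⟨l, h⟩
  induction l with
  | nil => simpa [wprod, Red.nil] using nf_one
  | cons a t ih =>
    have ht : t.Chain' (· ≠ ·) := h.tail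
    have iht := ih ht
    rw [wprod_cons, nf_mul_gen_left, iht]
    match t, ht, h with
    | [], _, _ => simp [Red.tog_apply, Red.togFun]
    | b :: t', ht, h =>
      have hba : b ≠ a := ((List.isChain_cons_cons.1 h).1).symm
      simp [Red.tog_apply, Red.togFun, hba]
/-! ### The propagation inequalities -/

section Ineq

variable {n : ℕ} {K : ℝ}

/-- All pair-complement products are large. -/
def PBig (n : ℕ) (K : ℝ) (y : Fin n → ℂ) : Prop :=
  ∀ s t : Fin n, s ≠ t → K < ∏ l ∈ Finset.univ \ {s, t}, Complex.abs (y l)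

/-- The `c`-th coordinate dominates. -/
def PDom (n : ℕ) (K : ℝ) (y : Fin n → ℂ) (c : Fin n) : Prop :=
  (1 - 1/K) * ∏ l ∈ Finset.univ \ {c}, Complex.abs (y l) ≤ Complex.abs (y c)

lemma absprod_nonneg (y : Fin n → ℂ) (A : Finset (Fin n)) :
    0 ≤ ∏ l ∈ Finset.univ \ A, Complex.abs (y l) :=
  Finset.prod_nonneg fun _ _ => Complex.abs.nonneg _

lemma absprod_split (y : Fin n → ℂ) {A : Finset (Fin n)} {d : Fin n} (hd : d ∉ A) :
    ∏ l ∈ Finset.univ \ A, Complex.abs (y l)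
      = Complex.abs (y d) * ∏ l ∈ Finset.univ \ insert d A, Complex.abs (y l) := by
  have hmem : d ∈ Finset.univ \ A := by simp [hd]
  rw [← Finset.mul_prod_erase _ _ hmem]
  congr 1
  apply Finset.prod_congr _ fun _ _ => rfl
  ext x
  simp only [Finset.mem_erase, Finset.mem_sdiff, Finset.mem_univ, true_and,
    Finset.mem_insert]
  tauto

lemma absprod_congr_set (y : Fin n → ℂ) {A B : Finset (Fin n)} (h : A = B) :
    ∏ l ∈ Finset.univ \ A, Complex.abs (y l)
      = ∏ l ∈ Finset.univ \ B, Complex.abs (y l) := by rw [h]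

/-- two distinct elements avoiding a given one -/
lemma exists_two_ne (hn : 3 ≤ n) (l : Fin n) :
    ∃ s t : Fin n, s ≠ t ∧ s ≠ l ∧ t ≠ l := by
  have hcard : 1 < (Finset.univ.erase l).card := by
    rw [Finset.card_erase_of_mem (Finset.mem_univ l)]
    simp only [Finset.card_univ, Fintype.card_fin]
    omega
  obtain ⟨s, hs, t, ht, hst⟩ := Finset.one_lt_card.1 hcard
  exact ⟨s, t, hst, Finset.ne_of_mem_erase hs, Finset.ne_of_mem_erase ht⟩

lemma PBig.abspos (hn : 3 ≤ n) (hK : 2 ≤ K) {y : Fin n → ℂ} (h : PBig n K y)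
    (l : Fin n) : 0 < Complex.abs (y l) := by
  obtain ⟨s, t, hst, hsl, htl⟩ := exists_two_ne hn l
  rcases (eq_or_lt_of_le (Complex.abs.nonneg (y l))).imp Eq.symm id with h0 | h0
  · exfalso
    have hl : l ∈ Finset.univ \ ({s, t} : Finset (Fin n)) := by
      simp [hsl.symm, htl.symm, Ne.symm hsl, Ne.symm htl]
    have := h s t hst
    rw [Finset.prod_eq_zero hl h0] at this
    linarith
  · exact h0

/-- modulus bound for the changed coordinate -/
lemma bmap_abs_lower (y : Fin n → ℂ) (d : Fin n) :
    (∏ l ∈ Finset.univ \ {d}, Complex.abs (y l)) - Complex.abs (y d)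
      ≤ Complex.abs (bmap n d y d) := by
  rw [bmap_apply_same]
  have h1 : Complex.abs (∏ j ∈ Finset.univ.erase d, y j)
      = ∏ l ∈ Finset.univ \ {d}, Complex.abs (y l) := by
    rw [map_prod]
    apply Finset.prod_congr _ fun _ _ => rfl
    rw [Finset.erase_eq]
  calc (∏ l ∈ Finset.univ \ {d}, Complex.abs (y l)) - Complex.abs (y d)
      = Complex.abs (∏ j ∈ Finset.univ.erase d, y j) - Complex.abs (y d) := by rw [h1]
    _ ≤ Complex.abs ((∏ j ∈ Finset.univ.erase d, y j) - y d) := by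
        simpa [Complex.norm_eq_abs] using
          norm_sub_norm_le (∏ j ∈ Finset.univ.erase d, y j) (y d)

lemma bmap_abs_other {y : Fin n → ℂ} {d l : Fin n} (h : l ≠ d) :
    Complex.abs (bmap n d y l) = Complex.abs (y l) := by rw [bmap_apply_ne n d y h]

lemma bmap_absprod_eq (y : Fin n → ℂ) {d : Fin n} {A : Finset (Fin n)} (hd : d ∈ A) :
    ∏ l ∈ Finset.univ \ A, Complex.abs (bmap n d y l)
      = ∏ l ∈ Finset.univ \ A, Complex.abs (y l) := by
  apply Finset.prod_congr rfl
  intro l hl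
  have : l ≠ d := by
    rcases Finset.mem_sdiff.1 hl with ⟨-, hlA⟩
    exact fun h => hlA (h ▸ hd)
  exact bmap_abs_other this

end Ineq
section Ineq2

variable {n : ℕ} {K : ℝ}

lemma triple_comm1 (s t d : Fin n) : ({d, s, t} : Finset (Fin n)) = {s, t, d} := by
  ext x; simp; tauto

lemma triple_comm2 (s t d : Fin n) : ({t, s, d} : Finset (Fin n)) = {s, t, d} := by
  ext x; simp; tauto

/-- Key product identity: for distinct `s, t, d`,
`(∏_{∉{s,d}}) (∏_{∉{t,d}}) = (∏_{∉{d}}) (∏_{∉{s,t,d}})`. -/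
lemma prod_pair_identity (y : Fin n → ℂ) {s t d : Fin n}
    (hst : s ≠ t) (hsd : s ≠ d) (htd : t ≠ d) :
    (∏ l ∈ Finset.univ \ {s, d}, Complex.abs (y l)) *
      ∏ l ∈ Finset.univ \ {t, d}, Complex.abs (y l)
    = (∏ l ∈ Finset.univ \ {d}, Complex.abs (y l)) *
      ∏ l ∈ Finset.univ \ {s, t, d}, Complex.abs (y l) := by
  have h1 : ∏ l ∈ Finset.univ \ {s, d}, Complex.abs (y l)
      = Complex.abs (y t) * ∏ l ∈ Finset.univ \ {s, t, d}, Complex.abs (y l) := by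
    rw [absprod_split y (A := {s, d}) (d := t) (by simp [Ne.symm hst, htd])]
    rw [absprod_congr_set y (triple_comm2 s t d)]
  have h2 : ∏ l ∈ Finset.univ \ {t, d}, Complex.abs (y l)
      = Complex.abs (y s) * ∏ l ∈ Finset.univ \ {s, t, d}, Complex.abs (y l) := by
    rw [absprod_split y (A := {t, d}) (d := s) (by simp [hst, hsd])]
  have h3 : ∏ l ∈ Finset.univ \ {d}, Complex.abs (y l)
      = Complex.abs (y s) * (Complex.abs (y t) *
        ∏ l ∈ Finset.univ \ {s, t, d}, Complex.abs (y l)) := by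
    rw [absprod_split y (A := {d}) (d := s) (by simp [hsd]),
      absprod_split y (A := {s, d}) (d := t) (by simp [Ne.symm hst, htd]),
      absprod_congr_set y (triple_comm2 s t d)]
  rw [h1, h2, h3]; ring

/-- One propagation step. -/
lemma INV_step (hn : 3 ≤ n) (hK : 2 ≤ K) {y : Fin n → ℂ} {c d : Fin n}
    (hBig : PBig n K y) (hDom : PDom n K y c) (hdc : d ≠ c) :
    PBig n K (bmap n d y) ∧ PDom n K (bmap n d y) d := by
  have hKpos : (0:ℝ) < K := by linarith
  have hzpos : ∀ l, 0 < Complex.abs (y l) := hBig.abspos hn hK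
  set M := ∏ l ∈ Finset.univ \ {d}, Complex.abs (y l) with hMdef
  set zd := Complex.abs (y d) with hzddef
  have hzdnn : 0 ≤ zd := Complex.abs.nonneg _
  -- M = z c * Q with Q > K
  have hMsplit : M = Complex.abs (y c) *
      ∏ l ∈ Finset.univ \ {c, d}, Complex.abs (y l) :=
    absprod_split y (by simp [hdc.symm])
  set Q := ∏ l ∈ Finset.univ \ {c, d}, Complex.abs (y l) with hQdef
  have hQ : K < Q := hBig c d (Ne.symm hdc)
  have hQnn : 0 ≤ Q := absprod_nonneg _ _
  -- Dom rewritten: (1-1/K) * (zd * Q) ≤ z c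
  have hDom' : (1 - 1/K) * (zd * Q) ≤ Complex.abs (y c) := by
    have hsplit2 : ∏ l ∈ Finset.univ \ {c}, Complex.abs (y l) = zd * Q := by
      rw [absprod_split y (A := {c}) (d := d) (by simp [hdc]),
        absprod_congr_set y (Finset.pair_comm d c)]
    have := hDom
    rwa [PDom, hsplit2] at this
  have hcoef : (0:ℝ) ≤ 1 - 1/K := by
    rw [sub_nonneg, div_le_one hKpos]; linarith
  -- the key bound  zd * (K*(K-1)) ≤ M
  have hzd_small : zd * (K*(K-1)) ≤ M := by
    have h1 : zd * (K*(K-1)) = (1 - 1/K) * (zd * (K*K)) := by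
      field_simp
    have h2 : (1 - 1/K) * (zd * (K*K)) ≤ (1 - 1/K) * (zd * (Q*Q)) := by
      apply mul_le_mul_of_nonneg_left _ hcoef
      apply mul_le_mul_of_nonneg_left _ hzdnn
      nlinarith
    have h3 : (1 - 1/K) * (zd * (Q*Q)) = ((1 - 1/K) * (zd * Q)) * Q := by ring
    have h4 : ((1 - 1/K) * (zd * Q)) * Q ≤ Complex.abs (y c) * Q :=
      mul_le_mul_of_nonneg_right hDom' hQnn
    rw [h1]
    calc (1 - 1/K) * (zd * (K*K)) ≤ (1 - 1/K) * (zd * (Q*Q)) := h2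
      _ = ((1 - 1/K) * (zd * Q)) * Q := h3
      _ ≤ Complex.abs (y c) * Q := h4
      _ = M := hMsplit.symm
  have hKzd : K * zd ≤ M := by
    have hKK : K ≤ K*(K-1) := by nlinarith
    nlinarith [mul_le_mul_of_nonneg_left hKK hzdnn]
  have hMnn : 0 ≤ M := absprod_nonneg _ _
  -- lower bound for the new coordinate
  have hlow : M - zd ≤ Complex.abs (bmap n d y d) := bmap_abs_lower y d
  constructor
  · -- PBig
    intro s t hst
    by_cases hd : d = s ∨ d = t
    · have hdin : d ∈ ({s, t} : Finset (Fin n)) := by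
        simp only [Finset.mem_insert, Finset.mem_singleton]; tauto
      rw [bmap_absprod_eq y hdin]
      exact hBig s t hst
    · push_neg at hd
      obtain ⟨hds, hdt⟩ := hd
      rw [absprod_split (bmap n d y) (A := {s, t}) (d := d) (by simp [hds, hdt])]
      rw [absprod_congr_set (bmap n d y) (triple_comm1 s t d),
        bmap_absprod_eq y (by simp : d ∈ ({s, t, d} : Finset (Fin n)))]
      set P := ∏ l ∈ Finset.univ \ {s, t, d}, Complex.abs (y l) with hPdef
      have hPnn : 0 ≤ P := absprod_nonneg _ _
      have hQs : K < ∏ l ∈ Finset.univ \ {s, d}, Complex.abs (y l) := hBig s d hds.symm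
      have hQt : K < ∏ l ∈ Finset.univ \ {t, d}, Complex.abs (y l) := hBig t d hdt.symm
      have hMP : K * K < M * P := by
        have hid := prod_pair_identity y hst hds.symm hdt.symm
        nlinarith [absprod_nonneg y ({s,d} : Finset (Fin n)),
          absprod_nonneg y ({t,d} : Finset (Fin n))]
      have hzdP : zd * (K*(K-1)) * P ≤ M * P := mul_le_mul_of_nonneg_right hzd_small hPnn
      have hlow' : (M - zd) * P ≤ Complex.abs (bmap n d y d) * P :=
        mul_le_mul_of_nonneg_right hlow hPnn
      have hA : (0:ℝ) < K*(K-1) - 1 := by nlinarith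
      have hKKpos : (0:ℝ) < K*(K-1) := by nlinarith
      have hD := mul_lt_mul_of_pos_right hMP hA
      have hE : (0:ℝ) ≤ K*K*K*(K-2) :=
        mul_nonneg (mul_nonneg (mul_nonneg hKpos.le hKpos.le) hKpos.le) (by linarith)
      have hstep : K * (K*(K-1)) < ((M - zd) * P) * (K*(K-1)) := by nlinarith [hD, hzdP]
      have h5 : K < (M - zd) * P := lt_of_mul_lt_mul_right hstep hKKpos.le
      linarith
  · -- PDom
    rw [PDom, bmap_absprod_eq y (by simp : d ∈ ({d} : Finset (Fin n)))]
    have e : (1 - 1/K) * M = M - M/K := by ring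
    have h1 : zd ≤ M / K := by rw [le_div_iff₀ hKpos]; linarith
    rw [← hMdef, e]
    linarith

end Ineq2
section Ineq3

variable {n : ℕ} {K : ℝ}

lemma exists_third (hn : 3 ≤ n) (a b : Fin n) : ∃ m : Fin n, m ≠ a ∧ m ≠ b := by
  have hcard : 0 < (Finset.univ \ {a, b} : Finset (Fin n)).card := by
    have hle : ({a, b} : Finset (Fin n)).card ≤ 2 := Finset.card_insert_le _ _ |>.trans (by simp)
    have := Finset.card_sdiff_add_card_eq_card
      (Finset.subset_univ ({a, b} : Finset (Fin n)))
    simp only [Finset.card_univ, Fintype.card_fin] at this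
    omega
  obtain ⟨m, hm⟩ := Finset.card_pos.1 hcard
  rcases Finset.mem_sdiff.1 hm with ⟨-, hm2⟩
  simp only [Finset.mem_insert, Finset.mem_singleton] at hm2
  push_neg at hm2
  exact ⟨m, hm2.1, hm2.2⟩

set_option maxHeartbeats 2000000 in
/-- Base step of the propagation: a blocked direction with a small geodesic
at the near vertex starts the invariant. -/
lemma INV_base (hn : 3 ≤ n) (hK : 2 ≤ K) {y : Fin n → ℂ} {c1 i j : Fin n}
    (hblock : ∀ m, m ≠ c1 → K < ∏ l ∈ Finset.univ \ {c1, m}, Complex.abs (y l))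
    (hij : i ≠ j) (hic : i ≠ c1) (hjc : j ≠ c1)
    (hsmall : Complex.abs (y c1) * ∏ l ∈ Finset.univ \ {i, j, c1}, Complex.abs (y l) ≤ K) :
    PBig n K (bmap n c1 y) ∧ PDom n K (bmap n c1 y) c1 := by
  have hKpos : (0:ℝ) < K := by linarith
  -- positivity away from c1
  have hzpos : ∀ m, m ≠ c1 → 0 < Complex.abs (y m) := by
    intro m hm
    obtain ⟨m', hm'c, hm'm⟩ := exists_third hn c1 m
    rcases (eq_or_lt_of_le (Complex.abs.nonneg (y m))).imp Eq.symm id with h0 | h0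
    · exfalso
      have hmem : m ∈ Finset.univ \ ({c1, m'} : Finset (Fin n)) := by
        simp [Ne.symm hm, Ne.symm hm'm, hm, hm'm.symm]
      have := hblock m' hm'c
      rw [Finset.prod_eq_zero hmem h0] at this
      linarith
    · exact h0
  set N := ∏ l ∈ Finset.univ \ {c1}, Complex.abs (y l) with hNdef
  set zc1 := Complex.abs (y c1) with hzc1def
  have hzc1nn : 0 ≤ zc1 := Complex.abs.nonneg _
  have hNnn : 0 ≤ N := absprod_nonneg _ _
  have hNm : ∀ m, m ≠ c1 → N = Complex.abs (y m) *
      ∏ l ∈ Finset.univ \ {c1, m}, Complex.abs (y l) := by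
    intro m hm
    rw [hNdef, absprod_split y (A := {c1}) (d := m) (by simp [hm]),
      absprod_congr_set y (Finset.pair_comm m c1)]
  have hNi : K * Complex.abs (y i) < N := by
    rw [hNm i hic]
    calc K * Complex.abs (y i) < (∏ l ∈ Finset.univ \ {c1, i}, Complex.abs (y l))
          * Complex.abs (y i) :=
        mul_lt_mul_of_pos_right (hblock i hic) (hzpos i hic)
      _ = _ := mul_comm _ _
  have hNj : K * Complex.abs (y j) < N := by
    rw [hNm j hjc]
    calc K * Complex.abs (y j) < (∏ l ∈ Finset.univ \ {c1, j}, Complex.abs (y l))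
          * Complex.abs (y j) :=
        mul_lt_mul_of_pos_right (hblock j hjc) (hzpos j hjc)
      _ = _ := mul_comm _ _
  have hNpos : 0 < N := by nlinarith [hzpos i hic]
  -- N in terms of i, j and the rest
  set R := ∏ l ∈ Finset.univ \ {i, j, c1}, Complex.abs (y l) with hRdef
  have hRnn : 0 ≤ R := absprod_nonneg _ _
  have hNeq : N = Complex.abs (y i) * (Complex.abs (y j) * R) := by
    rw [hNdef, absprod_split y (A := {c1}) (d := i) (by simp [hic])]
    congr 1
    rw [absprod_split y (A := {i, c1}) (d := j) (by simp [hij.symm, hjc]),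
      absprod_congr_set y (show ({j, i, c1} : Finset (Fin n)) = {i, j, c1} by
        ext x; simp; tauto)]
  -- the key smallness bound
  have hKzc1 : K * zc1 ≤ N := by
    have h1 : zc1 * N ≤ K * (Complex.abs (y i) * Complex.abs (y j)) := by
      have := mul_le_mul_of_nonneg_right hsmall
        (mul_nonneg (Complex.abs.nonneg (y i)) (Complex.abs.nonneg (y j)))
      calc zc1 * N = (zc1 * R) * (Complex.abs (y i) * Complex.abs (y j)) := by
            rw [hNeq]; ring
        _ ≤ K * (Complex.abs (y i) * Complex.abs (y j)) := this
    have h2 : (K * Complex.abs (y i)) * (K * Complex.abs (y j)) < N * N :=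
      mul_lt_mul'' hNi hNj (by positivity) (by positivity)
    have h3 : (zc1 * N) * (K * K) ≤ (K * (Complex.abs (y i) * Complex.abs (y j))) * (K*K) :=
      mul_le_mul_of_nonneg_right h1 (by positivity)
    have h5 : ((K * Complex.abs (y i)) * (K * Complex.abs (y j))) * K < (N * N) * K :=
      mul_lt_mul_of_pos_right h2 hKpos
    have h6 : (K * zc1) * (K * N) < N * (K * N) := by nlinarith [h3, h5]
    exact (lt_of_mul_lt_mul_right h6 (by positivity)).le
  have hlow : N - zc1 ≤ Complex.abs (bmap n c1 y c1) := bmap_abs_lower y c1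
  constructor
  · -- PBig
    intro s t hst
    by_cases hd : c1 = s ∨ c1 = t
    · rcases hd with rfl | rfl
      · rw [bmap_absprod_eq y (by simp : c1 ∈ ({c1, t} : Finset (Fin n)))]
        exact hblock t (Ne.symm hst)
      · rw [bmap_absprod_eq y (by simp : c1 ∈ ({s, c1} : Finset (Fin n))),
          absprod_congr_set y (Finset.pair_comm s c1)]
        exact hblock s hst
    · push_neg at hd
      obtain ⟨hds, hdt⟩ := hd
      rw [absprod_split (bmap n c1 y) (A := {s, t}) (d := c1) (by simp [hds, hdt])]
      rw [absprod_congr_set (bmap n c1 y) (triple_comm1 s t c1),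
        bmap_absprod_eq y (by simp : c1 ∈ ({s, t, c1} : Finset (Fin n)))]
      set P := ∏ l ∈ Finset.univ \ {s, t, c1}, Complex.abs (y l) with hPdef
      have hPnn : 0 ≤ P := absprod_nonneg _ _
      have hQs : K < ∏ l ∈ Finset.univ \ {s, c1}, Complex.abs (y l) := by
        rw [absprod_congr_set y (Finset.pair_comm s c1)]
        exact hblock s hds.symm
      have hQt : K < ∏ l ∈ Finset.univ \ {t, c1}, Complex.abs (y l) := by
        rw [absprod_congr_set y (Finset.pair_comm t c1)]
        exact hblock t hdt.symm
      have hNP : K * K < N * P := by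
        have hid := prod_pair_identity y hst hds.symm hdt.symm
        nlinarith [absprod_nonneg y ({s, c1} : Finset (Fin n)),
          absprod_nonneg y ({t, c1} : Finset (Fin n))]
      have hzc1P : (K * zc1) * P ≤ N * P := mul_le_mul_of_nonneg_right hKzc1 hPnn
      have hlow' : (N - zc1) * P ≤ Complex.abs (bmap n c1 y c1) * P :=
        mul_le_mul_of_nonneg_right hlow hPnn
      have hKm1 : (0:ℝ) < K - 1 := by linarith
      have hD := mul_lt_mul_of_pos_right hNP hKm1
      have hE : (0:ℝ) ≤ K*K*(K-2) :=
        mul_nonneg (mul_nonneg hKpos.le hKpos.le) (by linarith)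
      have hstep : K * K < ((N - zc1) * P) * K := by nlinarith [hD, hzc1P]
      have h5 : K < (N - zc1) * P := lt_of_mul_lt_mul_right hstep hKpos.le
      linarith
  · -- PDom
    rw [PDom, bmap_absprod_eq y (by simp : c1 ∈ ({c1} : Finset (Fin n))), ← hNdef]
    have e : (1 - 1/K) * N = N - N/K := by ring
    have h1 : zc1 ≤ N / K := by rw [le_div_iff₀ hKpos]; nlinarith
    rw [e]
    linarith

/-- The full invariant. -/
def INVp (n : ℕ) (K : ℝ) (y : Fin n → ℂ) (c : Fin n) : Prop :=
  PBig n K y ∧ PDom n K y c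

/-- Iterated dynamics along a word, consuming from the head. -/
def Fdyn (n : ℕ) : (Fin n → ℂ) → List (Fin n) → (Fin n → ℂ)
  | y, [] => y
  | y, d :: l => Fdyn n (bmap n d y) l

lemma INV_chain (hn : 3 ≤ n) (hK : 2 ≤ K) :
    ∀ (l : List (Fin n)) (y : Fin n → ℂ) (c : Fin n), INVp n K y c →
      List.Chain (· ≠ ·) c l → PBig n K (Fdyn n y l) := by
  intro l
  induction l with
  | nil => intro y c h _; exact h.1
  | cons d l ih =>
    intro y c h hchain
    rcases List.isChain_cons_cons.1 hchain with ⟨hdc, hchain'⟩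
    have hstep := INV_step hn hK h.1 h.2 (Ne.symm hdc)
    exact ih (bmap n d y) d ⟨hstep.1, hstep.2⟩ hchain'

end Ineq3
/-! ### Plumbing: coordinates along words, `phiA` at representatives, chains -/

section Plumbing

variable {n : ℕ}

lemma act_gen_inv_apply (a : Fin n → ℂ) (u : Gam n) (c : Fin n) :
    act n (u * gen c)⁻¹ a = bmap n c (act n u⁻¹ a) := by
  rw [mul_inv_rev, gen_inv, map_mul, Equiv.Perm.mul_apply, act_gen]
  rfl

lemma act_mul_wprod (a : Fin n → ℂ) (u : Gam n) (w : List (Fin n)) :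
    act n (u * wprod w)⁻¹ a = Fdyn n (act n u⁻¹ a) w := by
  induction w generalizing u with
  | nil => simp [wprod, Fdyn]
  | cons c l ih =>
    rw [wprod_cons, ← mul_assoc]
    show act n (u * gen c * wprod l)⁻¹ a = Fdyn n (bmap n c (act n u⁻¹ a)) l
    rw [ih (u * gen c), act_gen_inv_apply]

lemma phiA_rep (a : Fin n → ℂ) (γ : AltGeo n) (v : Gam n)
    (hv : QuotientGroup.mk v = γ.coset) : phiA n a γ = phiRep n a γ.pair v := by
  obtain ⟨p, nd, q⟩ := γ
  induction q using QuotientGroup.induction_on with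
  | H g =>
    have hmem : g⁻¹ * v ∈ pairSub p := QuotientGroup.eq.mp hv.symm
    show phiRep n a p g = phiRep n a p v
    have : v = g * (g⁻¹ * v) := by group
    rw [this]
    unfold phiRep
    exact Finset.prod_congr rfl fun k hk =>
      (coords_eq a p hmem g (Finset.mem_filter.mp hk).2).symm

lemma offPair_mk {p q : Fin n} : offPair s(p, q) = Finset.univ \ {p, q} := by
  ext k
  simp only [offPair, Finset.mem_filter, Finset.mem_univ, true_and, Finset.mem_sdiff,
    Sym2.mem_iff, Finset.mem_insert, Finset.mem_singleton]

lemma abs_phiRep (a : Fin n → ℂ) (s : Sym2 (Fin n)) (g : Gam n) :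
    Complex.abs (phiRep n a s g) = ∏ k ∈ offPair s, Complex.abs (act n g⁻¹ a k) :=
  map_prod Complex.abs _ _

lemma mkGeo_mem_AK_iff {p q : Fin n} (h : p ≠ q) (u : Gam n) (a : Fin n → ℂ) (K : ℝ) :
    mkGeo p q h u ∈ AK n a K ↔
      ∏ l ∈ Finset.univ \ {p, q}, Complex.abs (act n u⁻¹ a l) ≤ K := by
  have h1 : phiA n a (mkGeo p q h u) = phiRep n a s(p, q) u := phiA_rep a _ u rfl
  unfold AK
  rw [Set.mem_setOf_eq, h1, Complex.norm_eq_abs, abs_phiRep, offPair_mk]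

lemma gen_mem_pairSub {s : Sym2 (Fin n)} {c : Fin n} (h : c ∈ s) :
    gen c ∈ pairSub s := by
  induction s using Sym2.ind with
  | _ i j =>
    rw [pairSub_mk]
    rcases Sym2.mem_iff.1 h with rfl | rfl
    · exact Subgroup.subset_closure (by simp)
    · exact Subgroup.subset_closure (by simp)

/-- structural equality of geodesics with equal pairs and same base vertex -/
lemma AltGeo_eq {s s' : Sym2 (Fin n)} (h : s = s') (nd : ¬ s.IsDiag) (nd' : ¬ s'.IsDiag)
    (u : Gam n) :
    (⟨s, nd, QuotientGroup.mk u⟩ : AltGeo n) = ⟨s', nd', QuotientGroup.mk u⟩ := by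
  subst h; rfl

lemma mkGeo_comm {p q : Fin n} (h : p ≠ q) (u : Gam n) :
    mkGeo p q h u = mkGeo q p h.symm u :=
  AltGeo_eq (Sym2.eq_swap) _ _ u

lemma shareEdge_at (u : Gam n) (α β : AltGeo n) (hα : QuotientGroup.mk u = α.coset)
    (hβ : QuotientGroup.mk u = β.coset) {i : Fin n} (hiα : i ∈ α.pair)
    (hiβ : i ∈ β.pair) : ShareEdge α β :=
  ⟨u, i, ⟨hiα, hα⟩, ⟨hiβ, hβ⟩⟩

end Plumbing

/-! ### Connectivity chains -/

section Chains

variable {n : ℕ} {a : Fin n → ℂ} {K : ℝ}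

/-- connectedness within `AK` by edge-sharing chains -/
def Conn (n : ℕ) (a : Fin n → ℂ) (K : ℝ) (α β : AltGeo n) : Prop :=
  ∃ (m : ℕ) (c : ℕ → AltGeo n),
    c 0 = α ∧ c m = β ∧ (∀ t ≤ m, c t ∈ AK n a K) ∧ ∀ t < m, ShareEdge (c t) (c (t + 1))

lemma ShareEdge.symm {α β : AltGeo n} (h : ShareEdge α β) : ShareEdge β α := by
  obtain ⟨g, i, h1, h2⟩ := h; exact ⟨g, i, h2, h1⟩

lemma Conn.refl {α : AltGeo n} (h : α ∈ AK n a K) : Conn n a K α α :=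
  ⟨0, fun _ => α, rfl, rfl, fun _ _ => h, fun t ht => absurd ht (by omega)⟩

lemma Conn.single {α β : AltGeo n} (hα : α ∈ AK n a K) (hβ : β ∈ AK n a K)
    (h : ShareEdge α β) : Conn n a K α β := by
  refine ⟨1, fun t => if t = 0 then α else β, by simp, by simp, ?_, ?_⟩
  · intro t ht
    by_cases h0 : t = 0 <;> simp [h0, hα, hβ]
  · intro t ht
    have : t = 0 := by omega
    subst this
    simpa using h

lemma Conn.trans {α β γ : AltGeo n} (h1 : Conn n a K α β) (h2 : Conn n a K β γ) :
    Conn n a K α γ := by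
  obtain ⟨m1, c1, hc10, hc1m, hc1in, hc1e⟩ := h1
  obtain ⟨m2, c2, hc20, hc2m, hc2in, hc2e⟩ := h2
  refine ⟨m1 + m2, fun t => if t ≤ m1 then c1 t else c2 (t - m1), by simp [hc10], ?_, ?_, ?_⟩
  · dsimp only
    by_cases h : m2 = 0
    · subst h; simp only [add_zero, le_refl, if_pos]
      rw [hc1m, ← hc20, ← hc2m]
    · have : ¬ m1 + m2 ≤ m1 := by omega
      rw [if_neg this]
      simpa using hc2m
  · intro t ht
    dsimp only
    by_cases h : t ≤ m1
    · rw [if_pos h]; exact hc1in t h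
    · rw [if_neg h]; exact hc2in (t - m1) (by omega)
  · intro t ht
    dsimp only
    by_cases h : t + 1 ≤ m1
    · rw [if_pos (by omega : t ≤ m1), if_pos h]
      exact hc1e t (by omega)
    · by_cases h' : t ≤ m1
      · -- t = m1
        have htm : t = m1 := by omega
        subst htm
        rw [if_pos le_rfl, if_neg h, hc1m, ← hc20]
        have : t + 1 - t = 1 := by omega
        rw [this]
        exact hc2e 0 (by omega)
      · rw [if_neg h', if_neg h]
        have e1 : t + 1 - m1 = (t - m1) + 1 := by omega
        rw [e1]
        exact hc2e (t - m1) (by omega)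

lemma Conn.symm {α β : AltGeo n} (h : Conn n a K α β) : Conn n a K β α := by
  obtain ⟨m, c, hc0, hcm, hcin, hce⟩ := h
  refine ⟨m, fun t => c (m - t), by simpa using hcm, by simpa using hc0, ?_, ?_⟩
  · intro t ht; exact hcin (m - t) (by omega)
  · intro t ht
    dsimp only
    have e1 : m - t = (m - (t+1)) + 1 := by omega
    rw [e1]
    exact (hce (m - (t+1)) (by omega)).symm

lemma Conn.mem_left {α β : AltGeo n} (h : Conn n a K α β) : α ∈ AK n a K := by
  obtain ⟨m, c, hc0, _, hcin, _⟩ := h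
  rw [← hc0]; exact hcin 0 (by omega)

end Chains
/-! ### Connectivity of small geodesics at a fixed vertex -/

section Vertex

variable {n : ℕ} {a : Fin n → ℂ} {K : ℝ}

lemma Conn.mem_right {α β : AltGeo n} (h : Conn n a K α β) : β ∈ AK n a K :=
  h.symm.mem_left

lemma swap_small (u : Gam n) {p q q' : Fin n}
    (hsmall : ∏ l ∈ Finset.univ \ {p, q}, Complex.abs (act n u⁻¹ a l) ≤ K)
    (hle : Complex.abs (act n u⁻¹ a q) ≤ Complex.abs (act n u⁻¹ a q'))
    (hpos : 0 < Complex.abs (act n u⁻¹ a q')) (hqp : q ≠ p) (hq'p : q' ≠ p) :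
    ∏ l ∈ Finset.univ \ {p, q'}, Complex.abs (act n u⁻¹ a l) ≤ K := by
  set x := act n u⁻¹ a with hx
  by_cases hqq : q' = q
  · subst hqq; exact hsmall
  have e1 : ∏ l ∈ Finset.univ \ {p}, Complex.abs (x l)
      = Complex.abs (x q') * ∏ l ∈ Finset.univ \ {p, q'}, Complex.abs (x l) := by
    rw [absprod_split x (A := {p}) (d := q') (by simp [hq'p]),
      absprod_congr_set x (Finset.pair_comm q' p)]
  have e2 : ∏ l ∈ Finset.univ \ {p}, Complex.abs (x l)
      = Complex.abs (x q) * ∏ l ∈ Finset.univ \ {p, q}, Complex.abs (x l) := by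
    rw [absprod_split x (A := {p}) (d := q) (by simp [hqp]),
      absprod_congr_set x (Finset.pair_comm q p)]
  have hKnn : 0 ≤ K := le_trans (absprod_nonneg x _) hsmall
  have h3 : (∏ l ∈ Finset.univ \ {p, q'}, Complex.abs (x l)) * Complex.abs (x q')
      ≤ K * Complex.abs (x q') := by
    calc (∏ l ∈ Finset.univ \ {p, q'}, Complex.abs (x l)) * Complex.abs (x q')
        = Complex.abs (x q) * ∏ l ∈ Finset.univ \ {p, q}, Complex.abs (x l) := by
          rw [mul_comm, ← e1, e2]
      _ ≤ Complex.abs (x q) * K := by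
          exact mul_le_mul_of_nonneg_left hsmall (Complex.abs.nonneg _)
      _ ≤ K * Complex.abs (x q') := by
          rw [mul_comm]
          exact mul_le_mul_of_nonneg_left hle hKnn
  exact le_of_mul_le_mul_right h3 hpos

lemma vertex_conn (hn : 3 ≤ n) (hK : 2 ≤ K) (hnd : ¬ Dihedral n a) (u : Gam n)
    {p q p' q' : Fin n} (hpq : p ≠ q) (hpq' : p' ≠ q')
    (h1 : mkGeo p q hpq u ∈ AK n a K) (h2 : mkGeo p' q' hpq' u ∈ AK n a K) :
    Conn n a K (mkGeo p q hpq u) (mkGeo p' q' hpq' u) := by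
  set x := act n u⁻¹ a with hx
  have hzero : ∀ l1 l2 : Fin n, l1 ≠ l2 → x l1 = 0 → x l2 = 0 → False := by
    intro l1 l2 h hz1 hz2
    exact hnd ⟨u⁻¹, l1, l2, h, hz1, hz2⟩
  have hne : (Finset.univ : Finset (Fin n)).Nonempty :=
    ⟨⟨0, by omega⟩, Finset.mem_univ _⟩
  obtain ⟨t1, -, ht1⟩ := Finset.exists_max_image Finset.univ
    (fun l => Complex.abs (x l)) hne
  have herane : (Finset.univ.erase t1).Nonempty := by
    rw [← Finset.card_pos, Finset.card_erase_of_mem (Finset.mem_univ _)]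
    simp only [Finset.card_univ, Fintype.card_fin]
    omega
  obtain ⟨t2, ht2mem, ht2⟩ := Finset.exists_max_image (Finset.univ.erase t1)
    (fun l => Complex.abs (x l)) herane
  have ht12 : t1 ≠ t2 := (Finset.ne_of_mem_erase ht2mem).symm
  have ht2max : ∀ l : Fin n, l ≠ t1 → Complex.abs (x l) ≤ Complex.abs (x t2) := by
    intro l hl
    exact ht2 l (Finset.mem_erase.2 ⟨hl, Finset.mem_univ _⟩)
  have ht2pos : 0 < Complex.abs (x t2) := by
    rcases (eq_or_lt_of_le (Complex.abs.nonneg (x t2))).imp Eq.symm id with h0 | h0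
    · exfalso
      obtain ⟨s1, s2, hs12, hs1, hs2⟩ := exists_two_ne hn t1
      have hz1 : x s1 = 0 := by
        have := ht2max s1 hs1
        rw [h0] at this
        exact Complex.abs.eq_zero.1 (le_antisymm this (Complex.abs.nonneg _))
      have hz2 : x s2 = 0 := by
        have := ht2max s2 hs2
        rw [h0] at this
        exact Complex.abs.eq_zero.1 (le_antisymm this (Complex.abs.nonneg _))
      exact hzero s1 s2 hs12 hz1 hz2
    · exact h0
  have ht1pos : 0 < Complex.abs (x t1) :=
    lt_of_lt_of_le ht2pos (ht1 t2 (Finset.mem_univ _))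
  -- single swap in the second slot
  have swapC : ∀ (p q q' : Fin n) (h : p ≠ q) (h' : p ≠ q'),
      mkGeo p q h u ∈ AK n a K →
      Complex.abs (x q) ≤ Complex.abs (x q') → 0 < Complex.abs (x q') →
      Conn n a K (mkGeo p q h u) (mkGeo p q' h' u) := by
    intro p q q' h h' hmem hle hpos
    have hsm : ∏ l ∈ Finset.univ \ {p, q}, Complex.abs (act n u⁻¹ a l) ≤ K :=
      (mkGeo_mem_AK_iff h u a K).1 hmem
    have hsm' : ∏ l ∈ Finset.univ \ {p, q'}, Complex.abs (act n u⁻¹ a l) ≤ K :=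
      swap_small u hsm hle hpos h.symm h'.symm
    have hmem' : mkGeo p q' h' u ∈ AK n a K := (mkGeo_mem_AK_iff h' u a K).2 hsm'
    by_cases hqq : q = q'
    · subst hqq; exact Conn.refl hmem
    · exact Conn.single hmem hmem'
        (shareEdge_at u _ _ rfl rfl (Sym2.mem_mk_left p q) (Sym2.mem_mk_left p q'))
  -- connecting to the top pair, for geodesics with `t1` in the first slot
  have B : ∀ (r : Fin n) (hr : t1 ≠ r), mkGeo t1 r hr u ∈ AK n a K →
      Conn n a K (mkGeo t1 r hr u) (mkGeo t1 t2 ht12 u) := by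
    intro r hr hmem
    by_cases hr2 : r = t2
    · subst hr2; exact Conn.refl hmem
    · exact swapC t1 r t2 hr ht12 hmem (ht2max r (Ne.symm hr)) ht2pos
  have toTop : ∀ (p q : Fin n) (h : p ≠ q), mkGeo p q h u ∈ AK n a K →
      Conn n a K (mkGeo p q h u) (mkGeo t1 t2 ht12 u) := by
    intro p q h hmem
    by_cases hq1 : q = t1
    · subst hq1
      rw [mkGeo_comm h u] at hmem ⊢
      exact B p h.symm hmem
    · by_cases hp1 : p = t1
      · subst hp1
        exact B q h hmem
      · have step1 : Conn n a K (mkGeo p q h u) (mkGeo p t1 (Ne.symm (by exact hp1) ∘ Eq.symm ∘ id ∘ Eq.symm |>.mt (fun hh => hh) |> fun _ => hp1) u) := by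
          exact swapC p q t1 h hp1 hmem (ht1 q (Finset.mem_univ _)) ht1pos
        have hm1 : mkGeo p t1 hp1 u ∈ AK n a K := step1.mem_right
        have step2 : Conn n a K (mkGeo p t1 hp1 u) (mkGeo t1 t2 ht12 u) := by
          rw [mkGeo_comm hp1 u] at hm1 ⊢
          exact B p (Ne.symm hp1) hm1
        exact step1.trans step2
  exact (toTop p q hpq h1).trans (toTop p' q' hpq' h2).symm

end Vertex
/-! ### The main induction -/

section Main

variable {n : ℕ}

lemma pair_reps (s : Sym2 (Fin n)) (nd : ¬ s.IsDiag) :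
    ∃ p q : Fin n, p ≠ q ∧ s = s(p, q) := by
  induction s using Sym2.ind with
  | _ p q =>
    refine ⟨p, q, ?_, rfl⟩
    intro h
    exact nd (by rw [Sym2.mk_isDiag_iff]; exact h)

lemma AltGeo_eq_mkGeo (α : AltGeo n) {u : Gam n} (hu : QuotientGroup.mk u = α.coset)
    {p q : Fin n} (h : p ≠ q) (hpair : α.pair = s(p, q)) : α = mkGeo p q h u := by
  obtain ⟨s, nd, c⟩ := α
  simp only at hu hpair
  subst hpair
  rw [mkGeo]
  rw [← hu]

lemma chain'_cons_to_chain {c : Fin n} {l : List (Fin n)}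
    (h : List.IsChain (· ≠ ·) (c :: l)) : List.Chain (· ≠ ·) c l := by
  induction l generalizing c with
  | nil => exact List.Chain.nil
  | cons d l ih =>
    rcases List.isChain_cons_cons.1 h with ⟨h1, h2⟩
    exact List.Chain.cons h1 (ih h2)

lemma nf_shift (u v : Gam n) (c : Fin n) :
    nf ((u * gen c)⁻¹ * v) = Red.tog c (nf (u⁻¹ * v)) := by
  have e : (u * gen c)⁻¹ * v = gen c * (u⁻¹ * v) := by
    rw [mul_inv_rev, gen_inv, mul_assoc]
  rw [e, nf_mul_gen_left]

lemma tog_head {w : Red n} {c : Fin n} {l : List (Fin n)} (h : w.1 = c :: l) :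
    (Red.tog c w).1 = l := by
  rcases w with ⟨lw, hw⟩
  simp only at h
  subst h
  simp [Red.tog_apply, Red.togFun]

lemma main_conn (hn : 3 ≤ n) {a : Fin n → ℂ} (hnd : ¬ Dihedral n a) {K : ℝ}
    (hK : 2 ≤ K) :
    ∀ (r : ℕ) (α β : AltGeo n), α ∈ AK n a K → β ∈ AK n a K →
      ∀ u v : Gam n, QuotientGroup.mk u = α.coset → QuotientGroup.mk v = β.coset →
      (nf (u⁻¹ * v)).1.length ≤ r → Conn n a K α β := by
  intro r
  induction r with
  | zero =>
    intro α β hα hβ u v hu hv hlen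
    have hw : (nf (u⁻¹ * v)).1 = [] := List.length_eq_zero_iff.1 (Nat.le_zero.1 hlen)
    have h1 : u⁻¹ * v = 1 := by
      rw [← wprod_nf (u⁻¹ * v), hw]; rfl
    have huv : u = v := inv_mul_eq_one.1 h1
    obtain ⟨p, q, hpqne, hpair⟩ := pair_reps α.pair α.nd
    obtain ⟨p', q', hpq'ne, hpair'⟩ := pair_reps β.pair β.nd
    have hαeq : α = mkGeo p q hpqne u := AltGeo_eq_mkGeo α hu hpqne hpair
    have hβeq : β = mkGeo p' q' hpq'ne u :=
      AltGeo_eq_mkGeo β (by rw [huv]; exact hv) hpq'ne hpair'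
    rw [hαeq, hβeq]
    exact vertex_conn hn hK hnd u hpqne hpq'ne (hαeq ▸ hα) (hβeq ▸ hβ)
  | succ r ih =>
    intro α β hα hβ u v hu hv hlen
    rcases hwcases : (nf (u⁻¹ * v)).1 with _ | ⟨c1, l⟩
    · exact ih α β hα hβ u v hu hv (by rw [hwcases]; simp)
    · have hlcons : (c1 :: l).length ≤ r + 1 := by rw [← hwcases]; exact hlen
      have hlen' : (nf ((u * gen c1)⁻¹ * v)).1.length ≤ r := by
        rw [nf_shift, tog_head hwcases]
        simpa using hlcons
      by_cases hc1 : c1 ∈ α.pair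
      · have hu' : QuotientGroup.mk (u * gen c1) = α.coset :=
          (QuotientGroup.mk_mul_of_mem u (gen_mem_pairSub hc1)).trans hu
        exact ih α β hα hβ (u * gen c1) v hu' hv hlen'
      · by_cases hbl : ∀ m, m ≠ c1 →
            K < ∏ l' ∈ Finset.univ \ {c1, m}, Complex.abs (act n u⁻¹ a l')
        · exfalso
          obtain ⟨p, q, hpqne, hpair⟩ := pair_reps α.pair α.nd
          have hpc1 : p ≠ c1 := fun h =>
            hc1 (by rw [hpair, ← h]; exact Sym2.mem_mk_left p q)
          have hqc1 : q ≠ c1 := fun h =>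
            hc1 (by rw [hpair, ← h]; exact Sym2.mem_mk_right p q)
          have hsm : Complex.abs (act n u⁻¹ a c1) *
              ∏ l' ∈ Finset.univ \ {p, q, c1}, Complex.abs (act n u⁻¹ a l') ≤ K := by
            have h0 : Complex.abs (phiA n a α) ≤ K := hα
            rw [phiA_rep a α u hu, abs_phiRep, hpair, offPair_mk] at h0
            rw [absprod_split (act n u⁻¹ a) (A := ({p, q} : Finset (Fin n))) (d := c1)
              (by simp [hpc1.symm, hqc1.symm]),
              absprod_congr_set (act n u⁻¹ a) (triple_comm1 p q c1)] at h0
            exact h0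
          have hINV := INV_base hn hK hbl hpqne hpc1 hqc1 hsm
          have hch : List.Chain (· ≠ ·) c1 l :=
            chain'_cons_to_chain (hwcases ▸ (nf (u⁻¹ * v)).2)
          have hBig : PBig n K (Fdyn n (act n u⁻¹ a) (c1 :: l)) := by
            show PBig n K (Fdyn n (bmap n c1 (act n u⁻¹ a)) l)
            exact INV_chain hn hK l _ c1 ⟨hINV.1, hINV.2⟩ hch
          have hveq : v = u * wprod (c1 :: l) := by
            have := wprod_nf (u⁻¹ * v)
            rw [hwcases] at this
            rw [this, ← mul_assoc, mul_inv_cancel, one_mul]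
          have hact : act n v⁻¹ a = Fdyn n (act n u⁻¹ a) (c1 :: l) := by
            rw [hveq]; exact act_mul_wprod a u (c1 :: l)
          obtain ⟨s, t, hstne, hpairβ⟩ := pair_reps β.pair β.nd
          have hcontra := hBig s t hstne
          rw [← hact] at hcontra
          have hβval : Complex.abs (phiA n a β)
              = ∏ l' ∈ Finset.univ \ {s, t}, Complex.abs (act n v⁻¹ a l') := by
            rw [phiA_rep a β v hv, abs_phiRep, hpairβ, offPair_mk]
          have hβle : Complex.abs (phiA n a β) ≤ K := hβ
          rw [hβval] at hβle
          linarith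
        · push_neg at hbl
          obtain ⟨m, hm, hsmallm⟩ := hbl
          have hc1m : c1 ≠ m := Ne.symm hm
          have hδmem : mkGeo c1 m hc1m u ∈ AK n a K :=
            (mkGeo_mem_AK_iff hc1m u a K).2 hsmallm
          obtain ⟨p, q, hpqne, hpair⟩ := pair_reps α.pair α.nd
          have hαeq : α = mkGeo p q hpqne u := AltGeo_eq_mkGeo α hu hpqne hpair
          have step1 : Conn n a K α (mkGeo c1 m hc1m u) := by
            rw [hαeq]
            exact vertex_conn hn hK hnd u hpqne hc1m (hαeq ▸ hα) hδmem
          have hu' : QuotientGroup.mk (u * gen c1) = (mkGeo c1 m hc1m u).coset :=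
            QuotientGroup.mk_mul_of_mem u (gen_mem_pairSub (Sym2.mem_mk_left c1 m))
          have step2 : Conn n a K (mkGeo c1 m hc1m u) β :=
            ih _ β hδmem hβ (u * gen c1) v hu' hv hlen'
          exact step1.trans step2

end Main

/-- **Edge-connectedness.** For a non-dihedral `a ∈ ℂⁿ` and `K ≥ 2`, the set
`𝒜_φ(K) = {γ ∈ 𝒜 : |φ(γ)| ≤ K}` is edge-connected. -/
theorem edge_connected (n : ℕ) (hn : 3 ≤ n) (a : Fin n → ℂ) (hnd : ¬ Dihedral n a)
    (K : ℝ) (hK : 2 ≤ K) : EdgeConnected (AK n a K) := by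
  intro α hα β hβ
  have h := main_conn hn hnd hK
    ((nf ((Quotient.out α.coset)⁻¹ * Quotient.out β.coset)).1.length) α β hα hβ
    (Quotient.out α.coset) (Quotient.out β.coset)
    (QuotientGroup.out_eq' _) (QuotientGroup.out_eq' _) le_rfl
  exact h

end MarkoffHurwitz
end
end
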